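/- arXiv:1905.01597 — 3 statements merged into one kernel-verified Lean document; each statement's English description precedes it below -/
import Mathlib

section
/- For (z,y) ∈ W, the orbit G·(z,y) = {(g z gᵀ, g y hᵀ) : g ∈ GL_n(ℝ), h ∈ GL_d(ℝ)} is an open subset of W if and only if z is invertible and the d×d matrix yᵀ z⁻¹ y is invertible. -/
open Matrix

/-- The space `V` of symmetric `n × n` real matrices. -/
def SymMat (n : ℕ) := {A : Matrix (Fin n) (Fin n) ℝ // A.IsSymm}

/-- The underlying matrix of an element of `SymMat n`. -/
def SymMat.mat {n : ℕ} (z : SymMat n) : Matrix (Fin n) (Fin n) ℝ := z.1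

/-- `V` carries the (subspace) topology of a finite-dimensional real vector space. -/
instance (n : ℕ) : TopologicalSpace (SymMat n) :=
  inferInstanceAs (TopologicalSpace {A : Matrix (Fin n) (Fin n) ℝ // A.IsSymm})

namespace OrbitAux

attribute [local instance] Matrix.normedAddCommGroup Matrix.normedSpace

noncomputable section

variable {n d : ℕ}

/-- The orbit of `(z, y)`. -/
def orb (n d : ℕ) (z : SymMat n) (y : Matrix (Fin n) (Fin d) ℝ) :
    Set (SymMat n × Matrix (Fin n) (Fin d) ℝ) :=
  {p : SymMat n × Matrix (Fin n) (Fin d) ℝ |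
    ∃ g : Matrix (Fin n) (Fin n) ℝ, ∃ h : Matrix (Fin d) (Fin d) ℝ,
      IsUnit g.det ∧ IsUnit h.det ∧
        p.1.mat = g * z.mat * gᵀ ∧ p.2 = g * y * hᵀ}

lemma self_mem_orb (z : SymMat n) (y : Matrix (Fin n) (Fin d) ℝ) : (z, y) ∈ orb n d z y :=
  ⟨1, 1, by simp, by simp, by simp, by simp⟩

lemma orb_subset {z : SymMat n} {y : Matrix (Fin n) (Fin d) ℝ} {z₁ : SymMat n}
    {y₁ : Matrix (Fin n) (Fin d) ℝ} (g₁ : Matrix (Fin n) (Fin n) ℝ)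
    (h₁ : Matrix (Fin d) (Fin d) ℝ) (hg₁ : IsUnit g₁.det) (hh₁ : IsUnit h₁.det)
    (e1 : z₁.mat = g₁ * z.mat * g₁ᵀ) (e2 : y₁ = g₁ * y * h₁ᵀ) :
    orb n d z₁ y₁ ⊆ orb n d z y := by
  rintro ⟨z₂, y₂⟩ ⟨g, h, hg, hh, f1, f2⟩
  refine ⟨g * g₁, h * h₁, by rw [Matrix.det_mul]; exact hg.mul hg₁,
    by rw [Matrix.det_mul]; exact hh.mul hh₁, ?_, ?_⟩
  · show z₂.mat = _
    rw [show z₂.mat = (z₂, y₂).1.mat from rfl, f1, e1]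
    simp only [Matrix.transpose_mul, Matrix.mul_assoc]
  · show y₂ = _
    rw [show y₂ = (z₂, y₂).2 from rfl, f2, e2]
    simp only [Matrix.transpose_mul, Matrix.mul_assoc]

/-- Invariance of the second invariant. -/
lemma invariance {g : Matrix (Fin n) (Fin n) ℝ} {h : Matrix (Fin d) (Fin d) ℝ}
    (Z : Matrix (Fin n) (Fin n) ℝ) (y : Matrix (Fin n) (Fin d) ℝ)
    (hg : IsUnit g.det) :
    (g * y * hᵀ)ᵀ * (g * Z * gᵀ)⁻¹ * (g * y * hᵀ) = h * (yᵀ * Z⁻¹ * y) * hᵀ := by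
  have hgt : IsUnit gᵀ.det := by rwa [Matrix.det_transpose]
  rw [Matrix.mul_inv_rev, Matrix.mul_inv_rev]
  rw [Matrix.transpose_mul, Matrix.transpose_mul, Matrix.transpose_transpose]
  simp only [Matrix.mul_assoc]
  rw [Matrix.mul_nonsing_inv_cancel_left _ _ hgt,
    Matrix.nonsing_inv_mul_cancel_left _ _ hg]

end

end OrbitAux

noncomputable section Derivs

namespace OrbitAux

attribute [local instance] Matrix.normedAddCommGroup Matrix.normedSpace

open ContinuousLinearMap

/-- Matrix multiplication as a continuous bilinear map. -/
def mulCLM (a b c : ℕ) :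
    Matrix (Fin a) (Fin b) ℝ →L[ℝ] Matrix (Fin b) (Fin c) ℝ →L[ℝ] Matrix (Fin a) (Fin c) ℝ :=
  LinearMap.toContinuousLinearMap
  { toFun := fun M => LinearMap.toContinuousLinearMap
      { toFun := fun N => M * N
        map_add' := fun p q => Matrix.mul_add M p q
        map_smul' := fun r p => Matrix.mul_smul M r p }
    map_add' := fun p q => by ext N; simp [Matrix.add_mul]
    map_smul' := fun r p => by ext N; simp [Matrix.smul_mul] }

@[simp] lemma mulCLM_apply {a b c : ℕ} (M : Matrix (Fin a) (Fin b) ℝ)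
    (N : Matrix (Fin b) (Fin c) ℝ) : mulCLM a b c M N = M * N := rfl

/-- Transposition as a continuous linear map. -/
def trCLM (a b : ℕ) : Matrix (Fin a) (Fin b) ℝ →L[ℝ] Matrix (Fin b) (Fin a) ℝ :=
  LinearMap.toContinuousLinearMap
  { toFun := fun M => Mᵀ
    map_add' := fun p q => Matrix.transpose_add p q
    map_smul' := fun r p => Matrix.transpose_smul r p }

@[simp] lemma trCLM_apply {a b : ℕ} (M : Matrix (Fin a) (Fin b) ℝ) : trCLM a b M = Mᵀ := rfl

/-- The submodule of symmetric matrices. -/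
def symSub (n : ℕ) : Submodule ℝ (Matrix (Fin n) (Fin n) ℝ) where
  carrier := {A | Aᵀ = A}
  add_mem' := by
    intro a b ha hb
    simp only [Set.mem_setOf_eq] at *
    rw [Matrix.transpose_add, ha, hb]
  zero_mem' := by simp
  smul_mem' := by
    intro c a ha
    simp only [Set.mem_setOf_eq] at *
    rw [Matrix.transpose_smul, ha]

lemma mem_symSub_iff {n : ℕ} (A : Matrix (Fin n) (Fin n) ℝ) : A ∈ symSub n ↔ Aᵀ = A :=
  Iff.rfl

/-- Symmetrization, as a continuous linear map to the symmetric submodule. -/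
def piSym (n : ℕ) : Matrix (Fin n) (Fin n) ℝ →L[ℝ] symSub n :=
  LinearMap.toContinuousLinearMap
  { toFun := fun M => ⟨(2⁻¹ : ℝ) • (M + Mᵀ), by
      rw [mem_symSub_iff, Matrix.transpose_smul, Matrix.transpose_add,
        Matrix.transpose_transpose, add_comm]⟩
    map_add' := fun p q => by
      apply Subtype.ext
      simp only [Matrix.transpose_add, Submodule.coe_add]
      module
    map_smul' := fun r p => by
      apply Subtype.ext
      simp only [Matrix.transpose_smul, RingHom.id_apply, SetLike.val_smul]
      module }

@[simp] lemma piSym_apply_val {n : ℕ} (M : Matrix (Fin n) (Fin n) ℝ) :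
    (piSym n M : Matrix (Fin n) (Fin n) ℝ) = (2⁻¹ : ℝ) • (M + Mᵀ) := rfl

lemma piSym_of_symm {n : ℕ} (M : Matrix (Fin n) (Fin n) ℝ) (hM : Mᵀ = M) :
    (piSym n M : Matrix (Fin n) (Fin n) ℝ) = M := by
  rw [piSym_apply_val, hM, ← two_smul ℝ M, smul_smul]
  norm_num

variable {n d : ℕ}

/-- First component of the derivative of the orbit map. -/
def D1 (n d : ℕ) (A : Matrix (Fin n) (Fin n) ℝ) :
    (Matrix (Fin n) (Fin n) ℝ × Matrix (Fin d) (Fin d) ℝ) →L[ℝ] Matrix (Fin n) (Fin n) ℝ :=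
  LinearMap.toContinuousLinearMap
  { toFun := fun v => A * v.1ᵀ + v.1 * A
    map_add' := fun p q => by
      simp only [Prod.fst_add, Matrix.transpose_add, Matrix.mul_add, Matrix.add_mul]
      abel
    map_smul' := fun r p => by
      simp only [Prod.smul_fst, Matrix.transpose_smul, Matrix.mul_smul, Matrix.smul_mul,
        RingHom.id_apply, smul_add] }

@[simp] lemma D1_apply (A : Matrix (Fin n) (Fin n) ℝ)
    (v : Matrix (Fin n) (Fin n) ℝ × Matrix (Fin d) (Fin d) ℝ) :
    D1 n d A v = A * v.1ᵀ + v.1 * A := rfl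

/-- Second component of the derivative of the orbit map. -/
def D2 (n d : ℕ) (y : Matrix (Fin n) (Fin d) ℝ) :
    (Matrix (Fin n) (Fin n) ℝ × Matrix (Fin d) (Fin d) ℝ) →L[ℝ] Matrix (Fin n) (Fin d) ℝ :=
  LinearMap.toContinuousLinearMap
  { toFun := fun v => y * v.2ᵀ + v.1 * y
    map_add' := fun p q => by
      simp only [Prod.snd_add, Prod.fst_add, Matrix.transpose_add, Matrix.mul_add,
        Matrix.add_mul]
      abel
    map_smul' := fun r p => by
      simp only [Prod.smul_snd, Prod.smul_fst, Matrix.transpose_smul, Matrix.mul_smul,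
        Matrix.smul_mul, RingHom.id_apply, smul_add] }

@[simp] lemma D2_apply (y : Matrix (Fin n) (Fin d) ℝ)
    (v : Matrix (Fin n) (Fin n) ℝ × Matrix (Fin d) (Fin d) ℝ) :
    D2 n d y v = y * v.2ᵀ + v.1 * y := rfl

end OrbitAux

end Derivs

namespace OrbitAux

open Polynomial in
/-- If a family of matrices has polynomial entries and its determinant is nonzero somewhere,
then arbitrarily close to `0` (within any neighborhood `T` of `0`) we can find a parameter
where the determinant is nonzero. -/
lemma exists_det_ne {k : ℕ} (Mp : Matrix (Fin k) (Fin k) (Polynomial ℝ))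
    (F : ℝ → Matrix (Fin k) (Fin k) ℝ)
    (hF : ∀ t, F t = Mp.map (Polynomial.eval t))
    (t₀ : ℝ) (h0 : (F t₀).det ≠ 0) {T : Set ℝ} (hT : T ∈ nhds (0 : ℝ)) :
    ∃ t ∈ T, (F t).det ≠ 0 := by
  have heval : ∀ t, (F t).det = Mp.det.eval t := by
    intro t
    rw [hF t, show (Polynomial.eval t : Polynomial ℝ → ℝ) = ⇑(Polynomial.evalRingHom t) from rfl]
    exact ((Polynomial.evalRingHom t).map_det Mp).symm
  have hP : Mp.det ≠ 0 := by
    intro hzero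
    apply h0
    rw [heval, hzero, Polynomial.eval_zero]
  have hfin : {t : ℝ | Mp.det.IsRoot t}.Finite := Polynomial.finite_setOf_isRoot hP
  obtain ⟨ε, hε, hball⟩ := Metric.mem_nhds_iff.1 hT
  have hinf : (Metric.ball (0 : ℝ) ε).Infinite := by
    rw [Real.ball_eq_Ioo]
    exact Set.Ioo_infinite (by linarith)
  obtain ⟨t, ht⟩ := (hinf.diff hfin).nonempty
  refine ⟨t, hball ht.1, ?_⟩
  rw [heval]
  exact ht.2

/-- Nearby every real `t₀ = 0` there are `t` with `det (A + t • 1) ≠ 0`. -/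
lemma exists_shift_det_ne {k : ℕ} (A : Matrix (Fin k) (Fin k) ℝ) {T : Set ℝ}
    (hT : T ∈ nhds (0 : ℝ)) : ∃ t ∈ T, (A + t • (1 : Matrix (Fin k) (Fin k) ℝ)).det ≠ 0 := by
  -- find a point where the determinant is nonzero, by scaling
  have hcont : Continuous fun u : ℝ => (u • A + 1).det :=
    ((continuous_id.smul continuous_const).add continuous_const).matrix_det
  have h1 : (fun u : ℝ => (u • A + 1).det) 0 ≠ 0 := by simp
  have hne : {u : ℝ | (u • A + 1).det ≠ 0} ∈ nhds (0 : ℝ) :=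
    (isOpen_compl_singleton.preimage hcont).mem_nhds h1
  obtain ⟨ε, hε, hball⟩ := Metric.mem_nhds_iff.1 hne
  have hu : ((ε/2 : ℝ) • A + 1).det ≠ 0 := by
    apply hball
    simp only [Metric.mem_ball, Real.dist_eq, sub_zero]
    rw [abs_of_pos (by linarith)]
    linarith
  have hu0 : (ε/2 : ℝ) ≠ 0 := by positivity
  refine exists_det_ne (A.map Polynomial.C + (Polynomial.X : Polynomial ℝ) • 1)
    (fun t => A + t • 1) ?_ (ε/2)⁻¹ ?_ hT
  · intro t
    ext i j
    simp only [Matrix.add_apply, Matrix.smul_apply, Matrix.map_apply, Matrix.one_apply,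
      smul_eq_mul, mul_ite, mul_one, mul_zero, Polynomial.eval_add, Polynomial.eval_C,
      Polynomial.eval_mul, Polynomial.eval_X, Polynomial.eval_one, Polynomial.eval_zero,
      apply_ite (Polynomial.eval t)]
  · have hEq : A + ((ε/2 : ℝ)⁻¹) • (1 : Matrix (Fin k) (Fin k) ℝ)
        = (ε/2 : ℝ)⁻¹ • ((ε/2 : ℝ) • A + 1) := by
      rw [smul_add, smul_smul, inv_mul_cancel₀ hu0, one_smul, add_comm]
    show (A + (ε/2 : ℝ)⁻¹ • (1 : Matrix (Fin k) (Fin k) ℝ)).det ≠ 0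
    rw [hEq, Matrix.det_smul]
    exact mul_ne_zero (pow_ne_zero _ (inv_ne_zero hu0)) hu

/-- Given `B` with `det (y₀ᵀ * B * y₀) ≠ 0`, nearby every `t = 0` there are `t` with
`det ((y + t • y₀)ᵀ * B * (y + t • y₀)) ≠ 0`. -/
lemma exists_gram_det_ne {k m : ℕ} (B : Matrix (Fin k) (Fin k) ℝ)
    (y y₀ : Matrix (Fin k) (Fin m) ℝ) (hy₀ : (y₀ᵀ * B * y₀).det ≠ 0) {T : Set ℝ}
    (hT : T ∈ nhds (0 : ℝ)) :
    ∃ t ∈ T, ((y + t • y₀)ᵀ * B * (y + t • y₀)).det ≠ 0 := by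
  have hcont : Continuous fun u : ℝ => ((y₀ + u • y)ᵀ * B * (y₀ + u • y)).det := by
    have hyc : Continuous fun u : ℝ => y₀ + u • y :=
      continuous_const.add (continuous_id.smul continuous_const)
    exact ((hyc.matrix_transpose.matrix_mul continuous_const).matrix_mul hyc).matrix_det
  have h1 : (fun u : ℝ => ((y₀ + u • y)ᵀ * B * (y₀ + u • y)).det) 0 ≠ 0 := by simpa using hy₀
  have hne : {u : ℝ | ((y₀ + u • y)ᵀ * B * (y₀ + u • y)).det ≠ 0} ∈ nhds (0 : ℝ) :=
    (isOpen_compl_singleton.preimage hcont).mem_nhds h1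
  obtain ⟨ε, hε, hball⟩ := Metric.mem_nhds_iff.1 hne
  set u : ℝ := ε/2 with hu_def
  have hu : (((y₀ + u • y)ᵀ * B * (y₀ + u • y)).det) ≠ 0 := by
    apply hball
    simp only [Metric.mem_ball, Real.dist_eq, sub_zero]
    rw [abs_of_pos (by rw [hu_def]; linarith)]
    rw [hu_def]; linarith
  have hu0 : u ≠ 0 := by rw [hu_def]; positivity
  refine exists_det_ne
    ((y.map Polynomial.C + (Polynomial.X : Polynomial ℝ) • y₀.map Polynomial.C)ᵀ
      * B.map Polynomial.C
      * (y.map Polynomial.C + (Polynomial.X : Polynomial ℝ) • y₀.map Polynomial.C))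
    (fun t => (y + t • y₀)ᵀ * B * (y + t • y₀)) ?_ u⁻¹ ?_ hT
  · intro t
    rw [show (Polynomial.eval t : Polynomial ℝ → ℝ) = ⇑(Polynomial.evalRingHom t) from rfl]
    rw [Matrix.map_mul, Matrix.map_mul, Matrix.transpose_map]
    have e1 : (y.map Polynomial.C
        + (Polynomial.X : Polynomial ℝ) • y₀.map Polynomial.C).map (Polynomial.evalRingHom t)
        = y + t • y₀ := by
      ext i j
      simp only [Matrix.map_apply, Matrix.add_apply, Matrix.smul_apply, smul_eq_mul,
        Polynomial.coe_evalRingHom, Polynomial.eval_add, Polynomial.eval_mul,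
        Polynomial.eval_C, Polynomial.eval_X]
    have e2 : (B.map Polynomial.C).map (Polynomial.evalRingHom t) = B := by
      ext i j
      simp [Matrix.map_apply]
    rw [e1, e2]
  · have hEq : y + u⁻¹ • y₀ = u⁻¹ • (y₀ + u • y) := by
      rw [smul_add, smul_smul, inv_mul_cancel₀ hu0, one_smul, add_comm]
    show ((y + u⁻¹ • y₀)ᵀ * B * (y + u⁻¹ • y₀)).det ≠ 0
    rw [hEq, Matrix.transpose_smul, Matrix.smul_mul, Matrix.smul_mul, Matrix.mul_smul,
      smul_smul, Matrix.det_smul]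
    exact mul_ne_zero (pow_ne_zero _ (mul_ne_zero (inv_ne_zero hu0) (inv_ne_zero hu0))) hu

end OrbitAux

namespace OrbitAux

variable {n d : ℕ}

lemma exists_y0 (hdn : d ≤ n) (B : Matrix (Fin n) (Fin n) ℝ) (hBs : Bᵀ = B)
    (hBdet : B.det ≠ 0) : ∃ y₀ : Matrix (Fin n) (Fin d) ℝ, (y₀ᵀ * B * y₀).det ≠ 0 := by
  have hBh : B.IsHermitian := by
    rw [Matrix.IsHermitian, Matrix.conjTranspose_eq_transpose_of_trivial]
    exact hBs
  set U : Matrix (Fin n) (Fin n) ℝ := (Matrix.IsHermitian.eigenvectorUnitary hBh :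
    Matrix (Fin n) (Fin n) ℝ) with hU
  have hdiag : Uᵀ * B * U = Matrix.diagonal hBh.eigenvalues := by
    have := hBh.conjStarAlgAut_star_eigenvectorUnitary
    rw [Unitary.conjStarAlgAut_star_apply, Matrix.star_eq_conjTranspose, Matrix.conjTranspose_eq_transpose_of_trivial] at this
    rw [hU, this, RCLike.ofReal_real_eq_id, Function.id_comp]
  set E : Matrix (Fin n) (Fin d) ℝ :=
    Matrix.of (fun i j => if i = Fin.castLE hdn j then (1 : ℝ) else 0) with hE
  refine ⟨U * E, ?_⟩
  have key : (U * E)ᵀ * B * (U * E) = Matrix.diagonal (fun j => hBh.eigenvalues (Fin.castLE hdn j)) := by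
    have h1 : (U * E)ᵀ * B * (U * E) = Eᵀ * (Uᵀ * B * U) * E := by
      simp only [Matrix.transpose_mul, Matrix.mul_assoc]
    rw [h1, hdiag]
    ext j j'
    simp only [Matrix.mul_apply, Matrix.transpose_apply, Matrix.diagonal_apply, hE,
      Matrix.of_apply, ite_mul, mul_ite, one_mul, mul_one, zero_mul, mul_zero,
      Finset.sum_ite_eq, Finset.mem_univ, if_true]
    by_cases hjj : j = j'
    · subst hjj
      simp [Finset.sum_ite_eq']
    · have : Fin.castLE hdn j ≠ Fin.castLE hdn j' := by
        simpa [Fin.castLE_inj] using hjj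
      simp [this, hjj]
      intro h
      exact absurd h.symm hjj
  rw [key, Matrix.det_diagonal]
  have hev : ∀ i, hBh.eigenvalues i ≠ 0 := by
    intro i hi
    apply hBdet
    have := hBh.det_eq_prod_eigenvalues
    rw [this]
    exact Finset.prod_eq_zero (Finset.mem_univ i) (by exact_mod_cast hi)
  exact Finset.prod_ne_zero_iff.2 fun j _ => hev _

end OrbitAux

noncomputable section Key

namespace OrbitAux

attribute [local instance] Matrix.normedAddCommGroup Matrix.normedSpace

variable {n d : ℕ}

/-- The (symmetrized) orbit map near the identity. -/
def Fmap (n d : ℕ) (A : Matrix (Fin n) (Fin n) ℝ) (y : Matrix (Fin n) (Fin d) ℝ) :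
    (Matrix (Fin n) (Fin n) ℝ × Matrix (Fin d) (Fin d) ℝ) →
      symSub n × Matrix (Fin n) (Fin d) ℝ :=
  fun x => (piSym n ((1 + x.1) * (A * (1 + x.1)ᵀ)), (1 + x.1) * (y * (1 + x.2)ᵀ))

lemma orb_mem_nhds (z : SymMat n) (y : Matrix (Fin n) (Fin d) ℝ)
    (hz : IsUnit z.mat.det) (hs : IsUnit (yᵀ * z.mat⁻¹ * y).det) :
    orb n d z y ∈ nhds (z, y) := by
  classical
  set A := z.mat with hA
  have hAs : Aᵀ = A := z.2
  -- derivative of the first factor map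
  have hu₁ : HasStrictFDerivAt (fun x : Matrix (Fin n) (Fin n) ℝ × Matrix (Fin d) (Fin d) ℝ =>
      1 + x.1) (ContinuousLinearMap.fst ℝ _ _) 0 := by
    have h := (ContinuousLinearMap.fst ℝ (Matrix (Fin n) (Fin n) ℝ)
      (Matrix (Fin d) (Fin d) ℝ)).hasStrictFDerivAt
      (x := (0 : Matrix (Fin n) (Fin n) ℝ × Matrix (Fin d) (Fin d) ℝ))
    exact h.const_add (1 : Matrix (Fin n) (Fin n) ℝ)
  set tA : (Matrix (Fin n) (Fin n) ℝ × Matrix (Fin d) (Fin d) ℝ) →L[ℝ]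
      Matrix (Fin n) (Fin n) ℝ :=
    (mulCLM n n n A).comp ((trCLM n n).comp (ContinuousLinearMap.fst ℝ _ _)) with htA
  have htA_app : ∀ x : Matrix (Fin n) (Fin n) ℝ × Matrix (Fin d) (Fin d) ℝ,
      tA x = A * x.1ᵀ := fun _ => rfl
  have hu₂ : HasStrictFDerivAt (fun x : Matrix (Fin n) (Fin n) ℝ × Matrix (Fin d) (Fin d) ℝ =>
      A * (1 + x.1)ᵀ) tA 0 := by
    have heq : (fun x : Matrix (Fin n) (Fin n) ℝ × Matrix (Fin d) (Fin d) ℝ =>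
        A * (1 + x.1)ᵀ) = fun x => A + tA x := by
      funext x
      rw [htA_app, Matrix.transpose_add, Matrix.mul_add, Matrix.transpose_one, Matrix.mul_one]
    rw [heq]
    exact tA.hasStrictFDerivAt.const_add A
  set tY : (Matrix (Fin n) (Fin n) ℝ × Matrix (Fin d) (Fin d) ℝ) →L[ℝ]
      Matrix (Fin n) (Fin d) ℝ :=
    (mulCLM n d d y).comp ((trCLM d d).comp (ContinuousLinearMap.snd ℝ _ _)) with htY
  have htY_app : ∀ x : Matrix (Fin n) (Fin n) ℝ × Matrix (Fin d) (Fin d) ℝ,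
      tY x = y * x.2ᵀ := fun _ => rfl
  have hu₃ : HasStrictFDerivAt (fun x : Matrix (Fin n) (Fin n) ℝ × Matrix (Fin d) (Fin d) ℝ =>
      y * (1 + x.2)ᵀ) tY 0 := by
    have heq : (fun x : Matrix (Fin n) (Fin n) ℝ × Matrix (Fin d) (Fin d) ℝ =>
        y * (1 + x.2)ᵀ) = fun x => y + tY x := by
      funext x
      rw [htY_app, Matrix.transpose_add, Matrix.mul_add, Matrix.transpose_one, Matrix.mul_one]
    rw [heq]
    exact tY.hasStrictFDerivAt.const_add y
  have hD1 : HasStrictFDerivAt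
      (fun x : Matrix (Fin n) (Fin n) ℝ × Matrix (Fin d) (Fin d) ℝ =>
        (1 + x.1) * (A * (1 + x.1)ᵀ)) (D1 n d A) 0 := by
    have hraw := (mulCLM n n n).hasStrictFDerivAt_of_bilinear hu₁ hu₂
    refine hraw.congr_fderiv ?_
    refine ContinuousLinearMap.ext fun v => ?_
    simp [ContinuousLinearMap.precompR, ContinuousLinearMap.precompL, htA_app,
      ContinuousLinearMap.comp_apply, ContinuousLinearMap.flip_apply]
    show 1 * tA v + v.1 * A = A * v.1ᵀ + v.1 * A
    rw [htA_app, Matrix.one_mul]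
  have hD2 : HasStrictFDerivAt
      (fun x : Matrix (Fin n) (Fin n) ℝ × Matrix (Fin d) (Fin d) ℝ =>
        (1 + x.1) * (y * (1 + x.2)ᵀ)) (D2 n d y) 0 := by
    have hraw := (mulCLM n n d).hasStrictFDerivAt_of_bilinear hu₁ hu₃
    refine hraw.congr_fderiv ?_
    refine ContinuousLinearMap.ext fun v => ?_
    simp [ContinuousLinearMap.precompR, ContinuousLinearMap.precompL, htY_app,
      ContinuousLinearMap.comp_apply, ContinuousLinearMap.flip_apply]
    show (1 : Matrix (Fin n) (Fin n) ℝ) * tY v + v.1 * y = y * v.2ᵀ + v.1 * y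
    rw [htY_app, Matrix.one_mul]
  have hF : HasStrictFDerivAt (Fmap n d A y)
      (((piSym n).comp (D1 n d A)).prod (D2 n d y)) 0 :=
    (HasStrictFDerivAt.prodMk ((piSym n).hasStrictFDerivAt.comp 0 hD1) hD2)
  -- surjectivity of the derivative
  have hsurj : (((piSym n).comp (D1 n d A)).prod (D2 n d y)).range = ⊤ := by
    rw [LinearMap.range_eq_top]
    rintro ⟨⟨ζ, hζmem⟩, η⟩
    have hζ : ζᵀ = ζ := hζmem
    have hAinv : A⁻¹ᵀ = A⁻¹ := by rw [Matrix.transpose_nonsing_inv, hAs]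
    set s : Matrix (Fin d) (Fin d) ℝ := yᵀ * A⁻¹ * y with hsdef
    set a₀ : Matrix (Fin n) (Fin n) ℝ := (2⁻¹ : ℝ) • (ζ * A⁻¹) with ha₀
    set q : Matrix (Fin n) (Fin d) ℝ := (η - a₀ * y) * s⁻¹ with hq
    set m : Matrix (Fin n) (Fin n) ℝ := q * yᵀ - y * qᵀ with hm
    set a : Matrix (Fin n) (Fin n) ℝ := a₀ + m * A⁻¹ with ha
    set b : Matrix (Fin d) (Fin d) ℝ := (qᵀ * A⁻¹ * y)ᵀ with hb
    have haT : aᵀ = (2⁻¹ : ℝ) • (A⁻¹ * ζ) + A⁻¹ * mᵀ := by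
      rw [ha, Matrix.transpose_add, ha₀, Matrix.transpose_smul, Matrix.transpose_mul, hAinv,
        hζ, Matrix.transpose_mul, hAinv]
    have e2 : A * aᵀ = (2⁻¹ : ℝ) • ζ + mᵀ := by
      rw [haT, Matrix.mul_add, Matrix.mul_smul, Matrix.mul_nonsing_inv_cancel_left _ _ hz,
        Matrix.mul_nonsing_inv_cancel_left _ _ hz]
    have e3 : a * A = (2⁻¹ : ℝ) • ζ + m := by
      rw [ha, Matrix.add_mul, ha₀, Matrix.smul_mul, Matrix.nonsing_inv_mul_cancel_right _ _ hz,
        Matrix.nonsing_inv_mul_cancel_right _ _ hz]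
    have hmT : mᵀ = -m := by
      rw [hm]
      simp only [Matrix.transpose_sub, Matrix.transpose_mul, Matrix.transpose_transpose]
      abel
    have hfirst : A * aᵀ + a * A = ζ := by
      rw [e2, e3, hmT]
      have h2 : (2⁻¹ : ℝ) • ζ + (2⁻¹ : ℝ) • ζ = ζ := by
        rw [← add_smul]; norm_num
      calc (2⁻¹ : ℝ) • ζ + -m + ((2⁻¹ : ℝ) • ζ + m)
          = (2⁻¹ : ℝ) • ζ + (2⁻¹ : ℝ) • ζ := by abel
        _ = ζ := h2
    have hbT : bᵀ = qᵀ * A⁻¹ * y := by rw [hb, Matrix.transpose_transpose]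
    have h4 : q * yᵀ * A⁻¹ * y = q * s := by
      rw [hsdef]; simp only [Matrix.mul_assoc]
    have h5 : q * s = η - a₀ * y := by
      rw [hq, Matrix.nonsing_inv_mul_cancel_right _ _ hs]
    have h6 : y * qᵀ * A⁻¹ * y = y * bᵀ := by
      rw [hbT]; simp only [Matrix.mul_assoc]
    have e5 : a * y = a₀ * y + (η - a₀ * y) - y * bᵀ := by
      rw [ha, Matrix.add_mul, hm, Matrix.sub_mul, Matrix.sub_mul, h4, h5, h6]
      abel
    have hsecond : y * bᵀ + a * y = η := by
      rw [e5]; abel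
    refine ⟨(a, b), ?_⟩
    have happ : (((piSym n).comp (D1 n d A)).prod (D2 n d y)) (a, b)
        = (piSym n (A * aᵀ + a * A), y * bᵀ + a * y) := rfl
    rw [ContinuousLinearMap.coe_coe, happ, hfirst, hsecond]
    refine Prod.ext_iff.2 ⟨?_, rfl⟩
    exact Subtype.ext (piSym_of_symm ζ hζ)
  have hmap := hF.map_nhds_eq_of_surj hsurj
  -- the open set of invertible group elements
  set U : Set (Matrix (Fin n) (Fin n) ℝ × Matrix (Fin d) (Fin d) ℝ) :=
    {x | (1 + x.1).det ≠ 0 ∧ (1 + x.2).det ≠ 0} with hUdef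
  have hUopen : IsOpen U := by
    have c1 : Continuous fun x : Matrix (Fin n) (Fin n) ℝ × Matrix (Fin d) (Fin d) ℝ =>
        (1 + x.1).det := (continuous_const.add continuous_fst).matrix_det
    have c2 : Continuous fun x : Matrix (Fin n) (Fin n) ℝ × Matrix (Fin d) (Fin d) ℝ =>
        (1 + x.2).det := (continuous_const.add continuous_snd).matrix_det
    exact (isOpen_compl_singleton.preimage c1).inter (isOpen_compl_singleton.preimage c2)
  have h0U : (0 : Matrix (Fin n) (Fin n) ℝ × Matrix (Fin d) (Fin d) ℝ) ∈ U := by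
    simp [hUdef]
  have himgU : Fmap n d A y '' U ∈ nhds (Fmap n d A y 0) := by
    exact hmap.ge (Filter.image_mem_map (hUopen.mem_nhds h0U))
  -- transfer to the subtype topology
  set Φ : SymMat n × Matrix (Fin n) (Fin d) ℝ → symSub n × Matrix (Fin n) (Fin d) ℝ :=
    fun p => (⟨p.1.1, p.1.2⟩, p.2) with hΦdef
  have hΦ : Continuous Φ :=
    ((continuous_subtype_val.comp continuous_fst).subtype_mk _).prodMk continuous_snd
  have hF0 : Fmap n d A y 0 = (piSym n A, y) := by
    simp [Fmap]
  have hΦzy : Φ (z, y) = Fmap n d A y 0 := by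
    rw [hF0, hΦdef]
    refine Prod.ext_iff.2 ⟨?_, rfl⟩
    exact Subtype.ext (piSym_of_symm A hAs).symm
  have hpre : Φ ⁻¹' (Fmap n d A y '' U) ∈ nhds (z, y) :=
    hΦ.continuousAt.preimage_mem_nhds (by rw [hΦzy]; exact himgU)
  refine Filter.mem_of_superset hpre ?_
  rintro ⟨w, y₂⟩ ⟨x, hxU, hFx⟩
  obtain ⟨hx1, hx2⟩ := hxU
  refine ⟨1 + x.1, 1 + x.2, isUnit_iff_ne_zero.2 hx1, isUnit_iff_ne_zero.2 hx2, ?_, ?_⟩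
  · have h1 : ((Fmap n d A y x).1 : Matrix (Fin n) (Fin n) ℝ) = w.mat :=
      congrArg (fun p : symSub n × Matrix (Fin n) (Fin d) ℝ =>
        (p.1 : Matrix (Fin n) (Fin n) ℝ)) hFx
    have hsymm : ((1 + x.1) * (A * (1 + x.1)ᵀ))ᵀ = (1 + x.1) * (A * (1 + x.1)ᵀ) := by
      simp only [Matrix.transpose_mul, Matrix.transpose_transpose, hAs, Matrix.mul_assoc]
    have h2 : ((Fmap n d A y x).1 : Matrix (Fin n) (Fin n) ℝ)
        = (1 + x.1) * (A * (1 + x.1)ᵀ) := by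
      show ((piSym n ((1 + x.1) * (A * (1 + x.1)ᵀ))) : Matrix (Fin n) (Fin n) ℝ) = _
      exact piSym_of_symm _ hsymm
    rw [h2] at h1
    show w.mat = (1 + x.1) * z.mat * (1 + x.1)ᵀ
    rw [← hA, ← h1]
    exact (Matrix.mul_assoc _ _ _).symm
  · have h1 : (1 + x.1) * (y * (1 + x.2)ᵀ) = y₂ := congrArg Prod.snd hFx
    show y₂ = (1 + x.1) * y * (1 + x.2)ᵀ
    rw [← h1]
    exact (Matrix.mul_assoc _ _ _).symm

end OrbitAux

end Key

/-- the orbit `G·(z,y)` of `(z,y) ∈ W = Sym_n(ℝ) × M_{n,d}(ℝ)` under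
`G = GL_n(ℝ) × GL_d(ℝ)` acting by `(g,h)·(z,y) = (g z gᵀ, g y hᵀ)` is open in `W`
if and only if `z` is invertible and `yᵀ z⁻¹ y` is invertible. -/
theorem orbit_isOpen_iff (n d : ℕ) (hd : 1 ≤ d) (hdn : d ≤ n)
    (z : SymMat n) (y : Matrix (Fin n) (Fin d) ℝ) :
    IsOpen {p : SymMat n × Matrix (Fin n) (Fin d) ℝ |
        ∃ g : Matrix (Fin n) (Fin n) ℝ, ∃ h : Matrix (Fin d) (Fin d) ℝ,
          IsUnit g.det ∧ IsUnit h.det ∧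
            p.1.mat = g * z.mat * gᵀ ∧ p.2 = g * y * hᵀ} ↔
      (IsUnit z.mat.det ∧ IsUnit (yᵀ * z.mat⁻¹ * y).det) := by
  show IsOpen (OrbitAux.orb n d z y) ↔ _
  have hAs : z.matᵀ = z.mat := z.2
  constructor
  · intro hopen
    have hself : (z, y) ∈ OrbitAux.orb n d z y := OrbitAux.self_mem_orb z y
    have hz : IsUnit z.mat.det := by
      by_contra hz0
      rw [isUnit_iff_ne_zero, not_not] at hz0
      have hcsym : ∀ t : ℝ, (z.mat + t • (1 : Matrix (Fin n) (Fin n) ℝ)).IsSymm := by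
        intro t
        show (z.mat + t • (1 : Matrix (Fin n) (Fin n) ℝ))ᵀ = _
        rw [Matrix.transpose_add, Matrix.transpose_smul, Matrix.transpose_one, hAs]
      have hcont : Continuous (fun t : ℝ =>
          ((⟨z.mat + t • 1, hcsym t⟩ : SymMat n), y)) :=
        ((continuous_const.add (continuous_id.smul continuous_const)).subtype_mk
          _).prodMk continuous_const
      have hc0 : ((⟨z.mat + (0 : ℝ) • 1, hcsym 0⟩ : SymMat n), y) = (z, y) := by
        refine Prod.ext_iff.2 ⟨?_, rfl⟩
        exact Subtype.ext (by simp [SymMat.mat])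
      have hTm : (fun t : ℝ => ((⟨z.mat + t • 1, hcsym t⟩ : SymMat n), y)) ⁻¹'
          (OrbitAux.orb n d z y) ∈ nhds (0 : ℝ) :=
        hcont.continuousAt.preimage_mem_nhds (by rw [hc0]; exact hopen.mem_nhds hself)
      obtain ⟨t, htT, hdet⟩ := OrbitAux.exists_shift_det_ne z.mat hTm
      obtain ⟨g, h, hg, hh, e1, e2⟩ := htT
      apply hdet
      have e1' : z.mat + t • (1 : Matrix (Fin n) (Fin n) ℝ) = g * z.mat * gᵀ := e1
      rw [e1', Matrix.det_mul, Matrix.det_mul, hz0]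
      ring
    refine ⟨hz, ?_⟩
    by_contra hs0
    rw [isUnit_iff_ne_zero, not_not] at hs0
    have hBs : (z.mat⁻¹)ᵀ = z.mat⁻¹ := by rw [Matrix.transpose_nonsing_inv, hAs]
    have hBdet : (z.mat⁻¹).det ≠ 0 := by
      rw [Matrix.det_nonsing_inv, Ring.inverse_eq_inv]
      exact inv_ne_zero (isUnit_iff_ne_zero.1 hz)
    obtain ⟨y₀, hy₀⟩ := OrbitAux.exists_y0 hdn z.mat⁻¹ hBs hBdet
    have hcont : Continuous (fun t : ℝ => ((z, y + t • y₀) :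
        SymMat n × Matrix (Fin n) (Fin d) ℝ)) :=
      continuous_const.prodMk (continuous_const.add (continuous_id.smul continuous_const))
    have hc0 : ((z, y + (0 : ℝ) • y₀) : SymMat n × Matrix (Fin n) (Fin d) ℝ)
        = (z, y) := by simp
    have hTm : (fun t : ℝ => ((z, y + t • y₀) : SymMat n × Matrix (Fin n) (Fin d) ℝ)) ⁻¹'
        (OrbitAux.orb n d z y) ∈ nhds (0 : ℝ) :=
      hcont.continuousAt.preimage_mem_nhds (by rw [hc0]; exact hopen.mem_nhds hself)
    obtain ⟨t, htT, hdet⟩ := OrbitAux.exists_gram_det_ne z.mat⁻¹ y y₀ hy₀ hTm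
    obtain ⟨g, h, hg, hh, e1, e2⟩ := htT
    apply hdet
    have e1' : z.mat = g * z.mat * gᵀ := e1
    have e2' : y + t • y₀ = g * y * hᵀ := e2
    calc ((y + t • y₀)ᵀ * z.mat⁻¹ * (y + t • y₀)).det
        = ((g * y * hᵀ)ᵀ * (g * z.mat * gᵀ)⁻¹ * (g * y * hᵀ)).det := by
          rw [← e2', ← e1']
      _ = (h * (yᵀ * z.mat⁻¹ * y) * hᵀ).det := by rw [OrbitAux.invariance z.mat y hg]
      _ = 0 := by rw [Matrix.det_mul, Matrix.det_mul, hs0]; ring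
  · rintro ⟨hz, hs⟩
    rw [isOpen_iff_mem_nhds]
    rintro ⟨z₁, y₁⟩ hp
    obtain ⟨g₁, h₁, hg₁, hh₁, e1, e2⟩ := hp
    have e1' : z₁.mat = g₁ * z.mat * g₁ᵀ := e1
    have e2' : y₁ = g₁ * y * h₁ᵀ := e2
    have hg₁t : IsUnit g₁ᵀ.det := by rwa [Matrix.det_transpose]
    have hh₁t : IsUnit h₁ᵀ.det := by rwa [Matrix.det_transpose]
    have hz₁ : IsUnit z₁.mat.det := by
      rw [e1', Matrix.det_mul, Matrix.det_mul]
      exact (hg₁.mul hz).mul hg₁t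
    have hs₁ : IsUnit (y₁ᵀ * z₁.mat⁻¹ * y₁).det := by
      rw [e1', e2', OrbitAux.invariance z.mat y hg₁, Matrix.det_mul, Matrix.det_mul]
      exact (hh₁.mul hs).mul hh₁t
    have f1 : z.mat = g₁⁻¹ * z₁.mat * (g₁⁻¹)ᵀ := by
      rw [e1', Matrix.transpose_nonsing_inv]
      simp only [← Matrix.mul_assoc]
      rw [Matrix.nonsing_inv_mul _ hg₁, Matrix.one_mul,
        Matrix.mul_nonsing_inv_cancel_right _ _ hg₁t]
    have f2 : y = g₁⁻¹ * y₁ * (h₁⁻¹)ᵀ := by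
      rw [e2', Matrix.transpose_nonsing_inv]
      simp only [← Matrix.mul_assoc]
      rw [Matrix.nonsing_inv_mul _ hg₁, Matrix.one_mul,
        Matrix.mul_nonsing_inv_cancel_right _ _ hh₁t]
    have hset : OrbitAux.orb n d z y = OrbitAux.orb n d z₁ y₁ :=
      subset_antisymm
        (OrbitAux.orb_subset g₁⁻¹ (h₁⁻¹) (Matrix.isUnit_nonsing_inv_det _ hg₁)
          (Matrix.isUnit_nonsing_inv_det _ hh₁) f1 f2)
        (OrbitAux.orb_subset g₁ h₁ hg₁ hh₁ e1' e2')
    rw [hset]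
    exact OrbitAux.orb_mem_nhds z₁ y₁ hz₁ hs₁
end

section
/- Let (z,y), (z′,y′) ∈ W be such that z, z′ are invertible and yᵀ z⁻¹ y, y′ᵀ z′⁻¹ y′ are invertible. Then there exist g ∈ GL_n(ℝ) and h ∈ GL_d(ℝ) with z′ = g z gᵀ and y′ = g y hᵀ if and only if sgn(z) = sgn(z′) and sgn(yᵀ z⁻¹ y) = sgn(y′ᵀ z′⁻¹ y′). -/
open Matrix

/-- The signature `(p, q)` of a real symmetric (Hermitian) matrix: the numbers of
positive and negative eigenvalues, counted with multiplicity.  (Junk value `(0,0)`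
if the matrix is not Hermitian.) -/
noncomputable def matSign {m : ℕ} (a : Matrix (Fin m) (Fin m) ℝ) : ℕ × ℕ :=
  if h : a.IsHermitian then
    ((Finset.univ.filter fun i => 0 < h.eigenvalues i).card,
     (Finset.univ.filter fun i => h.eigenvalues i < 0).card)
  else (0, 0)

open Finset

namespace OrbitSigT

set_option linter.unusedSectionVars false
set_option linter.unusedVariables false

variable {m : ℕ}

/-- There is a `k`-dimensional subspace on which the quadratic form of `a` is positive
definite. -/
def HasPos (a : Matrix (Fin m) (Fin m) ℝ) (k : ℕ) : Prop :=
  ∃ B : Matrix (Fin m) (Fin k) ℝ, (Bᵀ * a * B).PosDef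

lemma hasPos_congr {a g : Matrix (Fin m) (Fin m) ℝ} (hg : IsUnit g.det) {k : ℕ} :
    HasPos (g * a * gᵀ) k ↔ HasPos a k := by
  constructor
  · rintro ⟨B, hB⟩
    refine ⟨gᵀ * B, ?_⟩
    have : (gᵀ * B)ᵀ * a * (gᵀ * B) = Bᵀ * (g * a * gᵀ) * B := by
      rw [transpose_mul, transpose_transpose]
      simp only [Matrix.mul_assoc]
    rwa [this]
  · rintro ⟨B, hB⟩
    refine ⟨gᵀ⁻¹ * B, ?_⟩
    have h1 : g⁻¹ * g = 1 := nonsing_inv_mul g hg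
    have h2 : gᵀ * gᵀ⁻¹ = 1 := mul_nonsing_inv gᵀ (by rwa [det_transpose])
    have : (gᵀ⁻¹ * B)ᵀ * (g * a * gᵀ) * (gᵀ⁻¹ * B) = Bᵀ * a * B := by
      rw [transpose_mul, transpose_nonsing_inv, transpose_transpose]
      simp only [Matrix.mul_assoc]
      rw [← Matrix.mul_assoc gᵀ gᵀ⁻¹, h2, Matrix.one_mul,
        ← Matrix.mul_assoc g⁻¹ g, h1, Matrix.one_mul]
    rwa [this]

lemma hasPos_diag_self (lam : Fin m → ℝ) :
    HasPos (diagonal lam) (univ.filter fun i => 0 < lam i).card := by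
  classical
  set S := univ.filter fun i => 0 < lam i with hS
  set p := S.card
  let emb : Fin p ≃o S := S.orderIsoOfFin rfl
  refine ⟨Matrix.of fun i j => if (emb j : Fin m) = i then (1 : ℝ) else 0, ?_⟩
  have key : (Matrix.of fun i j => if (emb j : Fin m) = i then (1 : ℝ) else 0)ᵀ *
      diagonal lam * (Matrix.of fun i j => if (emb j : Fin m) = i then (1 : ℝ) else 0) =
      diagonal fun j => lam (emb j) := by
    ext j k
    rw [Matrix.mul_assoc, Matrix.mul_apply]
    simp only [transpose_apply, Matrix.of_apply]
    have : ∀ i, (if (emb j : Fin m) = i then (1:ℝ) else 0) *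
        (diagonal lam * Matrix.of fun i j => if (emb j : Fin m) = i then (1 : ℝ) else 0) i k
        = if (emb j : Fin m) = i then lam (emb j) * (if (emb k : Fin m) = (emb j : Fin m) then 1 else 0) else 0 := by
      intro i
      by_cases h : (emb j : Fin m) = i
      · subst h; simp [Matrix.mul_apply, diagonal_apply, Finset.sum_ite_eq']
        by_cases h2 : (emb k : Fin m) = (emb j : Fin m)
        · simp only [@eq_comm _ k j]
        · simp only [@eq_comm _ k j]
      · simp [h]
    rw [Finset.sum_congr rfl fun i _ => this i, Finset.sum_ite_eq]
    simp only [Finset.mem_univ, if_true]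
    by_cases hjk : j = k
    · subst hjk; simp [diagonal_apply]
    · have : (emb k : Fin m) ≠ (emb j : Fin m) := by
        intro h
        exact hjk (emb.injective (Subtype.ext h)).symm
      simp [diagonal_apply, hjk, this]
  rw [key, posDef_diagonal_iff]
  intro j
  have := (emb j).2
  simp only [hS, Finset.mem_filter] at this
  exact this.2

lemma hasPos_diag_le {lam : Fin m → ℝ} {k : ℕ}
    (h : HasPos (diagonal lam) k) : k ≤ (univ.filter fun i => 0 < lam i).card := by
  classical
  obtain ⟨B, hB⟩ := h
  set S := univ.filter fun i => 0 < lam i with hS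
  set p := S.card with hp
  let emb : Fin p ≃o S := S.orderIsoOfFin rfl
  set L : (Fin k → ℝ) →ₗ[ℝ] (Fin p → ℝ) :=
    (LinearMap.funLeft ℝ ℝ (fun j => (emb j : Fin m))).comp B.mulVecLin with hL
  have hinj : Function.Injective L := by
    rw [← LinearMap.ker_eq_bot, LinearMap.ker_eq_bot']
    intro x hx
    by_contra hx0
    have hpos := hB.dotProduct_mulVec_pos hx0
    simp only [star_trivial] at hpos
    set v := B *ᵥ x with hv
    have hvS : ∀ i ∈ S, v i = 0 := by
      intro i hiS
      have := congrFun hx (emb.symm ⟨i, hiS⟩)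
      simp only [hL, LinearMap.comp_apply, LinearMap.funLeft_apply, mulVecLin_apply,
        Pi.zero_apply] at this
      rwa [OrderIso.apply_symm_apply] at this
    have hquad : (Bᵀ * diagonal lam * B) *ᵥ x = Bᵀ *ᵥ (diagonal lam *ᵥ v) := by
      rw [hv, mulVec_mulVec, mulVec_mulVec]
    have hdot : x ⬝ᵥ ((Bᵀ * diagonal lam * B) *ᵥ x) = v ⬝ᵥ (diagonal lam *ᵥ v) := by
      rw [hquad, dotProduct_mulVec, vecMul_transpose]
    have hnonpos : v ⬝ᵥ (diagonal lam *ᵥ v) ≤ 0 := by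
      rw [dotProduct]
      refine Finset.sum_nonpos fun i _ => ?_
      by_cases hiS : i ∈ S
      · simp [hvS i hiS]
      · have hneg : lam i ≤ 0 := by
          by_contra hpos'
          exact hiS (by simp [hS, lt_of_not_ge hpos'])
        have : v i * (diagonal lam *ᵥ v) i = lam i * (v i * v i) := by
          simp [mulVec_diagonal]; ring
        rw [this]
        exact mul_nonpos_of_nonpos_of_nonneg hneg (mul_self_nonneg _)
    rw [hdot] at hpos
    exact absurd hpos (not_lt.mpr hnonpos)
  calc k = Module.finrank ℝ (Fin k → ℝ) := (Module.finrank_fin_fun ℝ).symm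
    _ ≤ Module.finrank ℝ (Fin p → ℝ) := LinearMap.finrank_le_finrank_of_injective hinj
    _ = p := Module.finrank_fin_fun ℝ

lemma isHermitian_of_isSymm {a : Matrix (Fin m) (Fin m) ℝ} (ha : a.IsSymm) : a.IsHermitian := by
  rwa [Matrix.IsHermitian, conjTranspose_eq_transpose_of_trivial]

/-- Real symmetric decomposition `a = V D Vᵀ` with `V` invertible and `D` diagonal with
nonzero entries (for `a` invertible). -/
lemma exists_spectral {a : Matrix (Fin m) (Fin m) ℝ} (ha : a.IsSymm) (hua : IsUnit a.det) :
    ∃ (V : Matrix (Fin m) (Fin m) ℝ),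
      IsUnit V.det ∧
      a = V * diagonal ((isHermitian_of_isSymm ha).eigenvalues) * Vᵀ ∧
      ∀ i, (isHermitian_of_isSymm ha).eigenvalues i ≠ 0 := by
  have h := isHermitian_of_isSymm ha
  set V : Matrix (Fin m) (Fin m) ℝ := (Matrix.IsHermitian.eigenvectorUnitary h : Matrix (Fin m) (Fin m) ℝ) with hV
  have hsp := h.spectral_theorem
  have hstar : star V = Vᵀ := by
    rw [Matrix.star_eq_conjTranspose, conjTranspose_eq_transpose_of_trivial]
  have hdiag : diagonal (RCLike.ofReal ∘ h.eigenvalues) = diagonal h.eigenvalues := by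
    congr 1
  have hVdet : IsUnit V.det := by
    apply isUnit_det_of_right_inverse (B := star V)
    exact (Matrix.mem_unitaryGroup_iff).mp (Matrix.IsHermitian.eigenvectorUnitary h).2
  refine ⟨V, hVdet, ?_, ?_⟩
  · rw [← hstar, ← hdiag]; exact hsp
  · intro i hi
    have hdet : a.det = ∏ j, h.eigenvalues j := by
      have := h.det_eq_prod_eigenvalues
      simpa using this
    rw [hdet] at hua
    have := hua.ne_zero
    exact this (Finset.prod_eq_zero (Finset.mem_univ i) hi)

lemma matSign_spec {a : Matrix (Fin m) (Fin m) ℝ} (ha : a.IsSymm) (hua : IsUnit a.det) :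
    HasPos a (matSign a).1 ∧ (∀ k, HasPos a k → k ≤ (matSign a).1) ∧
      (matSign a).1 + (matSign a).2 = m := by
  have h := isHermitian_of_isSymm ha
  obtain ⟨V, hVdet, hsp, hnz⟩ := exists_spectral ha hua
  have hms : matSign a = ((univ.filter fun i => 0 < h.eigenvalues i).card,
      (univ.filter fun i => h.eigenvalues i < 0).card) := by
    rw [matSign, dif_pos h]
  have htrans : ∀ k, HasPos a k ↔ HasPos (diagonal h.eigenvalues) k := by
    intro k
    conv_lhs => rw [hsp]
    exact hasPos_congr hVdet
  refine ⟨?_, ?_, ?_⟩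
  · rw [hms]
    exact (htrans _).mpr (hasPos_diag_self _)
  · intro k hk
    rw [hms]
    exact hasPos_diag_le ((htrans k).mp hk)
  · rw [hms]
    have hsum := Finset.card_filter_add_card_filter_not
      (s := (univ : Finset (Fin m))) (p := fun i => 0 < h.eigenvalues i)
    have heqf : (univ.filter fun i => h.eigenvalues i < 0) =
        (univ.filter fun i => ¬ 0 < h.eigenvalues i) := by
      apply Finset.filter_congr
      intro i _
      simp only [not_lt, eq_iff_iff]
      constructor
      · intro hlt; exact le_of_lt hlt
      · intro hnlt
        exact lt_of_le_of_ne hnlt (hnz i)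
    simp only [heqf]
    convert hsum using 2
    simp

lemma matSign_congr {a a' g : Matrix (Fin m) (Fin m) ℝ} (ha : a.IsSymm)
    (hua : IsUnit a.det) (hg : IsUnit g.det) (he : a' = g * a * gᵀ) :
    matSign a' = matSign a := by
  have ha' : a'.IsSymm := by
    rw [he, Matrix.IsSymm]
    rw [transpose_mul, transpose_mul, transpose_transpose, ha.eq, Matrix.mul_assoc]
  have hua' : IsUnit a'.det := by
    rw [he, det_mul, det_mul, det_transpose]
    exact (hg.mul hua).mul hg
  obtain ⟨h1, h2, h3⟩ := matSign_spec ha hua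
  obtain ⟨h1', h2', h3'⟩ := matSign_spec ha' hua'
  have hfst : (matSign a').1 = (matSign a).1 := by
    apply le_antisymm
    · exact h2 _ ((hasPos_congr hg).mp (he ▸ h1'))
    · exact h2' _ (by rw [he]; exact (hasPos_congr hg).mpr h1)
  have hsnd : (matSign a').2 = (matSign a).2 := by omega
  exact Prod.ext hfst hsnd

lemma pm_det_unit {ε : Fin m → ℝ} (hε : ∀ i, ε i = 1 ∨ ε i = -1) :
    IsUnit (diagonal ε).det := by
  rw [det_diagonal, isUnit_iff_ne_zero]
  exact Finset.prod_ne_zero_iff.mpr fun i _ => by rcases hε i with h | h <;> rw [h] <;> norm_num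

lemma matSign_diag_pm {ε : Fin m → ℝ} (hε : ∀ i, ε i = 1 ∨ ε i = -1) :
    matSign (diagonal ε) =
      ((univ.filter fun i => ε i = 1).card, (univ.filter fun i => ε i = -1).card) := by
  have hsym : (diagonal ε).IsSymm := isSymm_diagonal ε
  have hdet : IsUnit (diagonal ε).det := pm_det_unit hε
  obtain ⟨h1, h2, h3⟩ := matSign_spec hsym hdet
  have hpos : (univ.filter fun i => 0 < ε i) = (univ.filter fun i => ε i = 1) := by
    apply Finset.filter_congr
    intro i _
    rcases hε i with h | h <;> rw [h] <;> norm_num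
  have hfst : (matSign (diagonal ε)).1 = (univ.filter fun i => ε i = 1).card := by
    apply le_antisymm
    · have := hasPos_diag_le h1
      rwa [hpos] at this
    · have := h2 _ (hasPos_diag_self ε)
      rwa [hpos] at this
  have hcard : (univ.filter fun i => ε i = 1).card + (univ.filter fun i => ε i = -1).card = m := by
    have hneg : (univ.filter fun i => ε i = -1) = (univ.filter fun i => ¬ ε i = 1) := by
      apply Finset.filter_congr
      intro i _
      rcases hε i with h | h <;> rw [h] <;> norm_num
    rw [hneg]
    have := Finset.card_filter_add_card_filter_not
      (s := (univ : Finset (Fin m))) (p := fun i => ε i = 1)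
    convert this using 2
    simp
  have hsnd : (matSign (diagonal ε)).2 = (univ.filter fun i => ε i = -1).card := by omega
  exact Prod.ext hfst hsnd

/-- Any invertible real symmetric matrix is congruent to a `±1` diagonal matrix with the
same signature. -/
lemma exists_diag_pm {a : Matrix (Fin m) (Fin m) ℝ} (ha : a.IsSymm) (hua : IsUnit a.det) :
    ∃ (g : Matrix (Fin m) (Fin m) ℝ) (ε : Fin m → ℝ),
      IsUnit g.det ∧ (∀ i, ε i = 1 ∨ ε i = -1) ∧
      a = g * diagonal ε * gᵀ ∧ matSign (diagonal ε) = matSign a := by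
  obtain ⟨V, hVdet, hsp, hnz⟩ := exists_spectral ha hua
  set ev := (isHermitian_of_isSymm ha).eigenvalues with hev
  set ε : Fin m → ℝ := fun i => if 0 < ev i then 1 else -1 with hε
  set s : Fin m → ℝ := fun i => Real.sqrt |ev i| with hs
  have hεpm : ∀ i, ε i = 1 ∨ ε i = -1 := by
    intro i; by_cases h : 0 < ev i <;> simp [hε, h]
  have hsd : diagonal s * diagonal ε * diagonal s = diagonal ev := by
    rw [diagonal_mul_diagonal, diagonal_mul_diagonal]
    suffices hfun : (fun i => (s i * ε i) * s i) = ev by rw [hfun]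
    funext i
    simp only [hε, hs]
    by_cases h : 0 < ev i
    · rw [if_pos h, mul_one, Real.mul_self_sqrt (abs_nonneg _), abs_of_pos h]
    · have hlt : ev i < 0 := lt_of_le_of_ne (not_lt.mp h) (hnz i)
      rw [if_neg h]
      have h2 : Real.sqrt |ev i| * Real.sqrt |ev i| = -ev i := by
        rw [Real.mul_self_sqrt (abs_nonneg _), abs_of_neg hlt]
      linear_combination -h2
  set g := V * diagonal s with hg
  have hsdet : IsUnit (diagonal s).det := by
    rw [det_diagonal, isUnit_iff_ne_zero]
    refine Finset.prod_ne_zero_iff.mpr fun i _ => ?_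
    simp only [hs]
    exact ne_of_gt (Real.sqrt_pos.mpr (abs_pos.mpr (hnz i)))
  have hgdet : IsUnit g.det := by
    rw [hg, det_mul]
    exact hVdet.mul hsdet
  have hrep : a = g * diagonal ε * gᵀ := by
    rw [hg, transpose_mul, diagonal_transpose]
    have : V * diagonal s * diagonal ε * (diagonal s * Vᵀ)
        = V * (diagonal s * diagonal ε * diagonal s) * Vᵀ := by
      simp only [Matrix.mul_assoc]
    rw [this, hsd]
    exact hsp
  refine ⟨g, ε, hgdet, hεpm, hrep, ?_⟩
  exact (matSign_congr (isSymm_diagonal ε) (pm_det_unit hεpm) hgdet hrep).symm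

variable {n d : ℕ}

/-- The orbit equivalence relation for the `GLₙ × GL_d` action. -/
def MRel (z : Matrix (Fin n) (Fin n) ℝ) (y : Matrix (Fin n) (Fin d) ℝ)
    (z' : Matrix (Fin n) (Fin n) ℝ) (y' : Matrix (Fin n) (Fin d) ℝ) : Prop :=
  ∃ (g : Matrix (Fin n) (Fin n) ℝ) (h : Matrix (Fin d) (Fin d) ℝ),
    IsUnit g.det ∧ IsUnit h.det ∧ z' = g * z * gᵀ ∧ y' = g * y * hᵀ

lemma MRel.symm {z z' : Matrix (Fin n) (Fin n) ℝ} {y y' : Matrix (Fin n) (Fin d) ℝ}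
    (h : MRel z y z' y') : MRel z' y' z y := by
  obtain ⟨g, h', hg, hh, hz, hy⟩ := h
  refine ⟨g⁻¹, h'⁻¹, isUnit_nonsing_inv_det _ hg, isUnit_nonsing_inv_det _ hh, ?_, ?_⟩
  · rw [hz, transpose_nonsing_inv]
    have e1 : g⁻¹ * (g * z * gᵀ) * gᵀ⁻¹ = g⁻¹ * g * (z * (gᵀ * gᵀ⁻¹)) := by
      simp only [Matrix.mul_assoc]
    rw [e1, nonsing_inv_mul _ hg, mul_nonsing_inv _ (by rwa [det_transpose]),
      Matrix.one_mul, Matrix.mul_one]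
  · rw [hy, transpose_nonsing_inv]
    have e1 : g⁻¹ * (g * y * h'ᵀ) * h'ᵀ⁻¹ = g⁻¹ * g * (y * (h'ᵀ * h'ᵀ⁻¹)) := by
      simp only [Matrix.mul_assoc]
    rw [e1, nonsing_inv_mul _ hg, mul_nonsing_inv _ (by rwa [det_transpose]),
      Matrix.one_mul, Matrix.mul_one]

lemma MRel.trans {z₁ z₂ z₃ : Matrix (Fin n) (Fin n) ℝ} {y₁ y₂ y₃ : Matrix (Fin n) (Fin d) ℝ}
    (h12 : MRel z₁ y₁ z₂ y₂) (h23 : MRel z₂ y₂ z₃ y₃) : MRel z₁ y₁ z₃ y₃ := by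
  obtain ⟨g, h, hg, hh, hz, hy⟩ := h12
  obtain ⟨g', h', hg', hh', hz', hy'⟩ := h23
  refine ⟨g' * g, h' * h, by rw [det_mul]; exact hg'.mul hg,
    by rw [det_mul]; exact hh'.mul hh, ?_, ?_⟩
  · rw [hz', hz, transpose_mul]
    simp only [Matrix.mul_assoc]
  · rw [hy', hy, transpose_mul]
    simp only [Matrix.mul_assoc]

section helpers

variable {K L M P : Type*} [Fintype L] [Fintype M]

lemma subL {A : Matrix K L ℝ} {B : Matrix L P ℝ} {K' : Type*} (f : K' → K) :
    (A.submatrix f id) * B = (A * B).submatrix f id := by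
  ext i j
  simp [Matrix.mul_apply]

lemma subR {A : Matrix K L ℝ} {B : Matrix L P ℝ} {P' : Type*} (f : P' → P) :
    A * (B.submatrix id f) = (A * B).submatrix id f := by
  ext i j
  simp [Matrix.mul_apply]

end helpers

section perm

variable {I : Type*} [Fintype I] [DecidableEq I]

lemma permM_mul (τ : I ≃ I) {P : Type*} (A : Matrix I P ℝ) :
    ((1 : Matrix I I ℝ).submatrix ⇑τ id) * A = A.submatrix ⇑τ id := by
  rw [subL, Matrix.one_mul]

lemma mul_permM {P : Type*} (τ : I ≃ I) (A : Matrix P I ℝ) :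
    A * ((1 : Matrix I I ℝ).submatrix id ⇑τ) = A.submatrix id ⇑τ := by
  rw [subR, Matrix.mul_one]

lemma permM_transpose (τ : I ≃ I) :
    ((1 : Matrix I I ℝ).submatrix ⇑τ id)ᵀ = (1 : Matrix I I ℝ).submatrix id ⇑τ := by
  rw [transpose_submatrix, transpose_one]

lemma permM_orth (τ : I ≃ I) :
    ((1 : Matrix I I ℝ).submatrix ⇑τ id) * ((1 : Matrix I I ℝ).submatrix id ⇑τ) = 1 := by
  rw [mul_permM, submatrix_submatrix]
  simp only [Function.comp_id, Function.id_comp]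
  exact submatrix_one ⇑τ τ.injective

lemma permM_isUnit (τ : I ≃ I) : IsUnit ((1 : Matrix I I ℝ).submatrix ⇑τ id).det :=
  isUnit_det_of_right_inverse (permM_orth τ)

end perm

section counting

variable {α β : Type*} [Fintype α] [Fintype β]

lemma card_filter_comp_equiv (e : α ≃ β) (p : β → Prop) [DecidablePred p] :
    (univ.filter fun a => p (e a)).card = (univ.filter p).card := by
  classical
  have : (univ.filter fun a : α => p (e a)) = (univ.filter p).map e.symm.toEmbedding := by
    ext a
    simp [Finset.mem_map_equiv]
  rw [this, Finset.card_map]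

lemma card_filter_sum (p : α ⊕ β → Prop) [DecidablePred p] :
    (univ.filter p).card =
      (univ.filter fun a => p (Sum.inl a)).card + (univ.filter fun b => p (Sum.inr b)).card := by
  classical
  rw [← Finset.card_toLeft_add_card_toRight]
  have h1 : (univ.filter p).toLeft = univ.filter (fun a => p (Sum.inl a)) := by ext x; simp
  have h2 : (univ.filter p).toRight = univ.filter (fun b => p (Sum.inr b)) := by ext x; simp
  rw [h1, h2]

lemma exists_comp_perm {k : ℕ} {ε ε' : Fin k → ℝ}
    (hε : ∀ i, ε i = 1 ∨ ε i = -1) (hε' : ∀ i, ε' i = 1 ∨ ε' i = -1)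
    (hc : (univ.filter fun i => ε' i = 1).card = (univ.filter fun i => ε i = 1).card) :
    ∃ σ : Fin k ≃ Fin k, ε' = ε ∘ ⇑σ := by
  classical
  have hcard1 : Fintype.card {i // ε' i = 1} = Fintype.card {i // ε i = 1} := by
    rw [Fintype.card_subtype, Fintype.card_subtype, hc]
  let e1 : {i // ε' i = 1} ≃ {i // ε i = 1} := Fintype.equivOfCardEq hcard1
  let e2 : {i // ¬ ε' i = 1} ≃ {i // ¬ ε i = 1} := Fintype.equivOfCardEq (by
    rw [Fintype.card_subtype_compl, Fintype.card_subtype_compl, hcard1])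
  refine ⟨(Equiv.sumCompl fun i => ε' i = 1).symm.trans
    ((e1.sumCongr e2).trans (Equiv.sumCompl fun i => ε i = 1)), ?_⟩
  funext i
  simp only [Function.comp_apply, Equiv.trans_apply]
  by_cases h : ε' i = 1
  · rw [Equiv.sumCompl_symm_apply_of_pos (p := fun i => ε' i = 1) h]
    simp only [Equiv.sumCongr_apply, Sum.map_inl, Equiv.sumCompl_apply_inl]
    rw [h, (e1 ⟨i, h⟩).2]
  · rw [Equiv.sumCompl_symm_apply_of_neg (p := fun i => ε' i = 1) h]
    simp only [Equiv.sumCongr_apply, Sum.map_inr, Equiv.sumCompl_apply_inr]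
    have h1 : ε' i = -1 := (hε' i).resolve_left h
    have h2 : ε ((e2 ⟨i, h⟩ : {i // ¬ ε i = 1}) : Fin k) = -1 :=
      (hε _).resolve_left (e2 ⟨i, h⟩).2
    rw [h1, h2]

end counting

def canE (hdn : d ≤ n) : (Fin d ⊕ Fin (n - d)) ≃ Fin n :=
  finSumFinEquiv.trans (finCongr (Nat.add_sub_cancel' hdn))

/-- The canonical second component. -/
noncomputable def CanY (hdn : d ≤ n) : Matrix (Fin n) (Fin d) ℝ :=
  (fromRows (1 : Matrix (Fin d) (Fin d) ℝ) (0 : Matrix (Fin (n - d)) (Fin d) ℝ)).submatrix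
    ⇑(canE hdn).symm id

lemma reduce (hdn : d ≤ n) (z : Matrix (Fin n) (Fin n) ℝ) (y : Matrix (Fin n) (Fin d) ℝ)
    (hzs : z.IsSymm) (hz : IsUnit z.det) (hy : IsUnit (yᵀ * z⁻¹ * y).det) :
    ∃ (ε : Fin d → ℝ) (ζ : Fin (n - d) → ℝ),
      (∀ i, ε i = 1 ∨ ε i = -1) ∧ (∀ j, ζ j = 1 ∨ ζ j = -1) ∧
      matSign (yᵀ * z⁻¹ * y) = matSign (diagonal ε) ∧
      matSign z = matSign (diagonal (Sum.elim ε ζ ∘ ⇑(canE hdn).symm)) ∧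
      MRel z y (diagonal (Sum.elim ε ζ ∘ ⇑(canE hdn).symm)) (CanY hdn) := by
  classical
  set e := canE hdn with he
  set b := yᵀ * z⁻¹ * y with hb
  have hzt : z⁻¹ᵀ = z⁻¹ := by rw [transpose_nonsing_inv, hzs.eq]
  have hbs : b.IsSymm := by
    show bᵀ = b
    rw [hb, transpose_mul, transpose_mul, transpose_transpose, hzt, ← Matrix.mul_assoc]
  set u := z⁻¹ * y with hu
  have huz : uᵀ * z = yᵀ := by
    rw [hu, transpose_mul, hzt, Matrix.mul_assoc, nonsing_inv_mul _ hz, Matrix.mul_one]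
  have hytu : yᵀ * u = b := by rw [hu, ← Matrix.mul_assoc, hb]
  have hutu : uᵀ * y = b := by
    have h1 : (yᵀ * u)ᵀ = bᵀ := by rw [hytu]
    rwa [transpose_mul, transpose_transpose, hbs.eq] at h1
  -- the kernel of `yᵀ`
  set f := yᵀ.mulVecLin with hf
  have hf_surj : Function.Surjective f := by
    intro v
    refine ⟨u *ᵥ (b⁻¹ *ᵥ v), ?_⟩
    show yᵀ *ᵥ (u *ᵥ (b⁻¹ *ᵥ v)) = v
    rw [mulVec_mulVec, mulVec_mulVec, hytu, mul_nonsing_inv _ hy, one_mulVec]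
  have hker : Module.finrank ℝ (LinearMap.ker f) = n - d := by
    have h1 := LinearMap.finrank_range_add_finrank_ker f
    rw [LinearMap.range_eq_top.mpr hf_surj, finrank_top, Module.finrank_fin_fun,
      Module.finrank_fin_fun] at h1
    omega
  set be := Module.finBasisOfFinrankEq ℝ (LinearMap.ker f) hker with hbe
  set w : Matrix (Fin n) (Fin (n - d)) ℝ := Matrix.of fun i j => (be j : Fin n → ℝ) i with hw
  have hyw : yᵀ * w = 0 := by
    ext k j
    have h0 : yᵀ *ᵥ (be j : Fin n → ℝ) = 0 := (be j).2
    have := congrFun h0 k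
    simpa [Matrix.mul_apply, Matrix.mulVec, dotProduct, hw] using this
  have hw_inj : ∀ c0 : Fin (n - d) → ℝ, w *ᵥ c0 = 0 → c0 = 0 := by
    intro c0 hc0
    have hcoe : ((∑ j, c0 j • be j : LinearMap.ker f) : Fin n → ℝ) = w *ᵥ c0 := by
      push_cast
      funext i
      simp only [Finset.sum_apply, Pi.smul_apply, smul_eq_mul]
      simp [Matrix.mulVec, dotProduct, hw, mul_comm]
    have hzero : (∑ j, c0 j • be j : LinearMap.ker f) = 0 := by
      apply Subtype.ext
      rw [hcoe, hc0]
      rfl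
    funext j
    exact Fintype.linearIndependent_iff.mp be.linearIndependent c0 hzero j
  set Psum := fromCols u w with hPsum
  set P := Psum.submatrix id ⇑e.symm with hP
  -- P is invertible
  have hker0 : ∀ x : Fin n → ℝ, P *ᵥ x = 0 → x = 0 := by
    intro x hx
    have hPx : P *ᵥ x = Psum *ᵥ (x ∘ ⇑e) := by
      rw [hP, submatrix_mulVec_equiv]
      simp
    set v₁ : Fin d → ℝ := fun a => x (e (Sum.inl a)) with hv₁
    set v₂ : Fin (n - d) → ℝ := fun a => x (e (Sum.inr a)) with hv₂
    have hxe : x ∘ ⇑e = Sum.elim v₁ v₂ := by funext s; cases s <;> rfl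
    have hsum0 : u *ᵥ v₁ + w *ᵥ v₂ = 0 := by
      rw [← fromCols_mulVec_sumElim, ← hxe, ← hPsum, ← hPx, hx]
    have hbv₁ : b *ᵥ v₁ = 0 := by
      have h2 : yᵀ *ᵥ (u *ᵥ v₁ + w *ᵥ v₂) = 0 := by rw [hsum0, mulVec_zero]
      rw [mulVec_add, mulVec_mulVec, mulVec_mulVec, hytu, hyw, zero_mulVec, add_zero] at h2
      exact h2
    have hv₁0 : v₁ = 0 := by
      have h3 : b⁻¹ *ᵥ (b *ᵥ v₁) = 0 := by rw [hbv₁, mulVec_zero]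
      rwa [mulVec_mulVec, nonsing_inv_mul _ hy, one_mulVec] at h3
    have hv₂0 : v₂ = 0 := by
      apply hw_inj
      rw [hv₁0, mulVec_zero, zero_add] at hsum0
      exact hsum0
    funext i
    have : x (e (e.symm i)) = 0 := by
      rcases hs : e.symm i with a | a
      · have := congrFun hv₁0 a
        simpa [hv₁] using this
      · have := congrFun hv₂0 a
        simpa [hv₂] using this
    rwa [Equiv.apply_symm_apply] at this
  have hPu : IsUnit P.det := by
    rw [← isUnit_iff_isUnit_det]
    rw [← Matrix.mulVec_injective_iff_isUnit]
    have hkb : LinearMap.ker P.mulVecLin = ⊥ :=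
      LinearMap.ker_eq_bot'.mpr fun x hx => hker0 x (by simpa using hx)
    have := LinearMap.ker_eq_bot.mp hkb
    exact this
  -- block structure
  set c := wᵀ * z * w with hc
  have hwzu : wᵀ * z * u = 0 := by
    have h1 : (wᵀ * z * u)ᵀ = 0 := by
      rw [transpose_mul (wᵀ * z) u, transpose_mul wᵀ z, transpose_transpose, hzs.eq,
        ← Matrix.mul_assoc, huz, hyw]
    rw [← transpose_transpose (wᵀ * z * u), h1, transpose_zero]
  have hsumblk : Psumᵀ * z * Psum = fromBlocks b 0 0 c := by
    rw [hPsum, transpose_fromCols, fromRows_mul, fromRows_mul_fromCols, huz, hytu, hyw,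
      hwzu, ← hc]
  have hPzP : Pᵀ * z * P = (fromBlocks b 0 0 c).submatrix ⇑e.symm ⇑e.symm := by
    rw [hP, transpose_submatrix, subL, subR, subL, submatrix_submatrix]
    simp only [Function.comp_id, Function.id_comp]
    rw [hsumblk]
  have hwty : wᵀ * y = 0 := by
    have h1 := congrArg transpose hyw
    rwa [transpose_mul, transpose_transpose, transpose_zero] at h1
  have hPy : Pᵀ * y = (fromRows b 0).submatrix ⇑e.symm id := by
    rw [hP, transpose_submatrix, subL, hPsum, transpose_fromCols, fromRows_mul, hutu, hwty]
  have hcs : c.IsSymm := by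
    show cᵀ = c
    rw [hc, transpose_mul, transpose_mul, transpose_transpose, hzs.eq, ← Matrix.mul_assoc]
  have hcd : IsUnit c.det := by
    have hdet1 : (Pᵀ * z * P).det = b.det * c.det := by
      rw [hPzP, det_submatrix_equiv_self, det_fromBlocks_zero₂₁]
    have hdet2 : IsUnit (Pᵀ * z * P).det := by
      rw [det_mul, det_mul, det_transpose]
      exact (hPu.mul hz).mul hPu
    rw [hdet1] at hdet2
    exact (IsUnit.mul_iff.mp hdet2).2
  obtain ⟨g₁, ε, hg₁, hεpm, hbeq, hbsig⟩ := exists_diag_pm hbs hy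
  obtain ⟨g₂, ζ, hg₂, hζpm, hceq, hcsig⟩ := exists_diag_pm hcs hcd
  have step1 : MRel z y ((fromBlocks b 0 0 c).submatrix ⇑e.symm ⇑e.symm)
      ((fromRows (1 : Matrix (Fin d) (Fin d) ℝ)
        (0 : Matrix (Fin (n - d)) (Fin d) ℝ)).submatrix ⇑e.symm id) := by
    refine ⟨Pᵀ, b⁻¹, by rw [det_transpose]; exact hPu, isUnit_nonsing_inv_det _ hy,
      by rw [transpose_transpose]; exact hPzP.symm, ?_⟩
    have hbit : b⁻¹ᵀ = b⁻¹ := by rw [transpose_nonsing_inv, hbs.eq]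
    rw [hbit, hPy, subL, fromRows_mul, mul_nonsing_inv _ hy, Matrix.zero_mul]
  have hb1 : g₁⁻¹ * b * g₁⁻¹ᵀ = diagonal ε := by
    rw [hbeq, transpose_nonsing_inv]
    have h5 : g₁⁻¹ * (g₁ * diagonal ε * g₁ᵀ) * g₁ᵀ⁻¹
        = g₁⁻¹ * g₁ * (diagonal ε * (g₁ᵀ * g₁ᵀ⁻¹)) := by
      simp only [Matrix.mul_assoc]
    rw [h5, nonsing_inv_mul _ hg₁, mul_nonsing_inv _ (by rwa [det_transpose]),
      Matrix.one_mul, Matrix.mul_one]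
  have hc1 : g₂⁻¹ * c * g₂⁻¹ᵀ = diagonal ζ := by
    rw [hceq, transpose_nonsing_inv]
    have h5 : g₂⁻¹ * (g₂ * diagonal ζ * g₂ᵀ) * g₂ᵀ⁻¹
        = g₂⁻¹ * g₂ * (diagonal ζ * (g₂ᵀ * g₂ᵀ⁻¹)) := by
      simp only [Matrix.mul_assoc]
    rw [h5, nonsing_inv_mul _ hg₂, mul_nonsing_inv _ (by rwa [det_transpose]),
      Matrix.one_mul, Matrix.mul_one]
  have step2 : MRel ((fromBlocks b 0 0 c).submatrix ⇑e.symm ⇑e.symm)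
      ((fromRows (1 : Matrix (Fin d) (Fin d) ℝ)
        (0 : Matrix (Fin (n - d)) (Fin d) ℝ)).submatrix ⇑e.symm id)
      ((fromBlocks (diagonal ε) 0 0 (diagonal ζ)).submatrix ⇑e.symm ⇑e.symm)
      ((fromRows (1 : Matrix (Fin d) (Fin d) ℝ)
        (0 : Matrix (Fin (n - d)) (Fin d) ℝ)).submatrix ⇑e.symm id) := by
    set G := (fromBlocks g₁⁻¹ 0 0 g₂⁻¹).submatrix ⇑e.symm ⇑e.symm with hG
    have hGdet : IsUnit G.det := by
      rw [hG, det_submatrix_equiv_self, det_fromBlocks_zero₂₁]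
      exact (isUnit_nonsing_inv_det _ hg₁).mul (isUnit_nonsing_inv_det _ hg₂)
    refine ⟨G, g₁ᵀ, hGdet, by rw [det_transpose]; exact hg₁, ?_, ?_⟩
    · have hblk : fromBlocks g₁⁻¹ 0 0 g₂⁻¹ * fromBlocks b 0 0 c * (fromBlocks g₁⁻¹ 0 0 g₂⁻¹)ᵀ
          = fromBlocks (diagonal ε) 0 0 (diagonal ζ) := by
        rw [fromBlocks_transpose, transpose_zero, transpose_zero, fromBlocks_multiply,
          fromBlocks_multiply]
        simp only [Matrix.mul_zero, Matrix.zero_mul, add_zero, zero_add]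
        rw [hb1, hc1]
      rw [hG, transpose_submatrix, submatrix_mul_equiv, submatrix_mul_equiv, hblk]
    · rw [transpose_transpose, hG, submatrix_mul_equiv, fromBlocks_mul_fromRows]
      simp only [Matrix.mul_one, Matrix.mul_zero, Matrix.zero_mul, add_zero, zero_add]
      rw [subL, fromRows_mul, nonsing_inv_mul _ hg₁, Matrix.zero_mul]
  have hcomb := step1.trans step2
  have hZdiag : (fromBlocks (diagonal ε) 0 0 (diagonal ζ)).submatrix ⇑e.symm ⇑e.symm
      = diagonal (Sum.elim ε ζ ∘ ⇑e.symm) := by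
    rw [fromBlocks_diagonal, submatrix_diagonal_equiv]
  rw [hZdiag] at hcomb
  refine ⟨ε, ζ, hεpm, hζpm, hbsig.symm, ?_, ?_⟩
  · obtain ⟨G0, H0, hG0u, _, hzeq, _⟩ := hcomb
    exact (matSign_congr hzs hz hG0u hzeq).symm
  · exact hcomb

lemma b_isSymm {z : Matrix (Fin n) (Fin n) ℝ} (hzs : z.IsSymm) (y : Matrix (Fin n) (Fin d) ℝ) :
    (yᵀ * z⁻¹ * y).IsSymm := by
  show _ᵀ = _
  rw [transpose_mul (yᵀ * z⁻¹) y, transpose_mul yᵀ z⁻¹, transpose_transpose,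
    transpose_nonsing_inv, hzs.eq, ← Matrix.mul_assoc]

lemma permRel (hdn : d ≤ n) {ε ε' : Fin d → ℝ} {ζ ζ' : Fin (n - d) → ℝ}
    (σ₁ : Fin d ≃ Fin d) (σ₂ : Fin (n - d) ≃ Fin (n - d))
    (hε : ε' = ε ∘ ⇑σ₁) (hζ : ζ' = ζ ∘ ⇑σ₂) :
    MRel (diagonal (Sum.elim ε ζ ∘ ⇑(canE hdn).symm)) (CanY hdn)
      (diagonal (Sum.elim ε' ζ' ∘ ⇑(canE hdn).symm)) (CanY hdn) := by
  classical
  set e := canE hdn with he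
  set τ : Fin n ≃ Fin n := (e.symm.trans (Equiv.sumCongr σ₁ σ₂)).trans e with hτ
  have hfun : (Sum.elim ε' ζ' ∘ ⇑e.symm) = (Sum.elim ε ζ ∘ ⇑e.symm) ∘ ⇑τ := by
    funext i
    simp only [Function.comp_apply, hτ, Equiv.trans_apply, Equiv.symm_apply_apply]
    cases hs : e.symm i with
    | inl a => simp [hε]
    | inr a => simp [hζ]
  refine ⟨(1 : Matrix (Fin n) (Fin n) ℝ).submatrix ⇑τ id,
    (1 : Matrix (Fin d) (Fin d) ℝ).submatrix ⇑σ₁ id, permM_isUnit τ, permM_isUnit σ₁, ?_, ?_⟩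
  · rw [permM_transpose, permM_mul, mul_permM, submatrix_submatrix]
    simp only [Function.comp_id, Function.id_comp]
    rw [submatrix_diagonal_equiv, hfun]
  · rw [permM_transpose, permM_mul, CanY, submatrix_submatrix]
    simp only [Function.comp_id, Function.id_comp]
    have hrow : (fromRows (1 : Matrix (Fin d) (Fin d) ℝ)
          (0 : Matrix (Fin (n - d)) (Fin d) ℝ)).submatrix (⇑(canE hdn).symm ∘ ⇑τ) id
        = (fromRows ((1 : Matrix (Fin d) (Fin d) ℝ).submatrix ⇑σ₁ id)
            (0 : Matrix (Fin (n - d)) (Fin d) ℝ)).submatrix ⇑(canE hdn).symm id := by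
      ext i j
      simp only [submatrix_apply, Function.comp_apply, hτ, Equiv.trans_apply,
        Equiv.symm_apply_apply, id_eq, ← he]
      cases hs : e.symm i with
      | inl a => simp [Matrix.fromRows]; rfl
      | inr a => simp [Matrix.fromRows]; rfl
    rw [hrow, subL, fromRows_mul, permM_orth σ₁, Matrix.zero_mul]

end OrbitSigT

section
open OrbitSigT

/-- two points `(z,y)`, `(z',y')` of `W = Sym_n(ℝ) × M_{n,d}(ℝ)` with
`z, z'` invertible and `yᵀz⁻¹y`, `y'ᵀz'⁻¹y'` invertible lie in the same
`GL_n(ℝ) × GL_d(ℝ)`-orbit (for the action `(g,h)·(z,y) = (g z gᵀ, g y hᵀ)`) if and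
only if `sgn z = sgn z'` and `sgn (yᵀ z⁻¹ y) = sgn (y'ᵀ z'⁻¹ y')`. -/
theorem orbit_classification_by_signatures (n d : ℕ) (hd : 1 ≤ d) (hdn : d ≤ n)
    (z z' : SymMat n) (y y' : Matrix (Fin n) (Fin d) ℝ)
    (hz : IsUnit z.mat.det) (hz' : IsUnit z'.mat.det)
    (hy : IsUnit (yᵀ * z.mat⁻¹ * y).det) (hy' : IsUnit (y'ᵀ * z'.mat⁻¹ * y').det) :
    (∃ g : Matrix (Fin n) (Fin n) ℝ, ∃ h : Matrix (Fin d) (Fin d) ℝ,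
        IsUnit g.det ∧ IsUnit h.det ∧ z'.mat = g * z.mat * gᵀ ∧ y' = g * y * hᵀ) ↔
      (matSign z.mat = matSign z'.mat ∧
        matSign (yᵀ * z.mat⁻¹ * y) = matSign (y'ᵀ * z'.mat⁻¹ * y')) := by
  classical
  have hzsym : z.mat.IsSymm := z.2
  have hzsym' : z'.mat.IsSymm := z'.2
  constructor
  · rintro ⟨g, h, hg, hh, hz'eq, hy'eq⟩
    constructor
    · exact (matSign_congr hzsym hz hg hz'eq).symm
    · have heq : y'ᵀ * z'.mat⁻¹ * y' = h * (yᵀ * z.mat⁻¹ * y) * hᵀ := by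
        rw [hy'eq, hz'eq]
        rw [Matrix.mul_inv_rev (g * z.mat) gᵀ, Matrix.mul_inv_rev g z.mat]
        rw [transpose_mul (g * y) hᵀ, transpose_mul g y, transpose_transpose]
        have h2 : gᵀ * gᵀ⁻¹ = 1 := mul_nonsing_inv _ (by rwa [det_transpose])
        have h3 : g⁻¹ * g = 1 := nonsing_inv_mul _ hg
        simp only [Matrix.mul_assoc]
        rw [← Matrix.mul_assoc gᵀ gᵀ⁻¹, h2, Matrix.one_mul,
          ← Matrix.mul_assoc g⁻¹ g, h3, Matrix.one_mul]
      exact (matSign_congr (b_isSymm hzsym y) hy hh heq).symm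
  · rintro ⟨hsz, hsb⟩
    obtain ⟨ε, ζ, hεpm, hζpm, hbsig, hzsig, hrel⟩ := reduce hdn z.mat y hzsym hz hy
    obtain ⟨ε', ζ', hε'pm, hζ'pm, hbsig', hzsig', hrel'⟩ := reduce hdn z'.mat y' hzsym' hz' hy'
    have hη : matSign (diagonal (Sum.elim ε ζ ∘ ⇑(canE hdn).symm))
        = matSign (diagonal (Sum.elim ε' ζ' ∘ ⇑(canE hdn).symm)) := by
      rw [← hzsig, ← hzsig', hsz]
    have hεeq : matSign (diagonal ε) = matSign (diagonal ε') := by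
      rw [← hbsig, ← hbsig', hsb]
    have hηpm : ∀ i, (Sum.elim ε ζ ∘ ⇑(canE hdn).symm) i = 1 ∨
        (Sum.elim ε ζ ∘ ⇑(canE hdn).symm) i = -1 := by
      intro i
      simp only [Function.comp_apply]
      cases hs : (canE hdn).symm i with
      | inl a => simpa using hεpm a
      | inr a => simpa using hζpm a
    have hη'pm : ∀ i, (Sum.elim ε' ζ' ∘ ⇑(canE hdn).symm) i = 1 ∨
        (Sum.elim ε' ζ' ∘ ⇑(canE hdn).symm) i = -1 := by
      intro i
      simp only [Function.comp_apply]
      cases hs : (canE hdn).symm i with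
      | inl a => simpa using hε'pm a
      | inr a => simpa using hζ'pm a
    -- equal counts for ε
    rw [matSign_diag_pm hεpm, matSign_diag_pm hε'pm] at hεeq
    have hcε : (univ.filter fun i => ε' i = 1).card = (univ.filter fun i => ε i = 1).card :=
      ((Prod.ext_iff.mp hεeq).1).symm
    -- equal counts for ζ
    rw [matSign_diag_pm hηpm, matSign_diag_pm hη'pm] at hη
    have hηcount : ∀ (a : Fin d → ℝ) (b : Fin (n - d) → ℝ),
        (univ.filter fun i => (Sum.elim a b ∘ ⇑(canE hdn).symm) i = 1).card
          = (univ.filter fun i => a i = 1).card + (univ.filter fun j => b j = 1).card := by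
      intro a b
      have h1 := card_filter_comp_equiv ((canE hdn).symm) (fun s => Sum.elim a b s = 1)
      have h2 := card_filter_sum (fun s : Fin d ⊕ Fin (n - d) => Sum.elim a b s = 1)
      exact h1.trans h2
    have hcζ : (univ.filter fun i => ζ' i = 1).card = (univ.filter fun i => ζ i = 1).card := by
      have h1 := (Prod.ext_iff.mp hη).1
      rw [hηcount ε ζ, hηcount ε' ζ'] at h1
      omega
    obtain ⟨σ₁, hσ₁⟩ := exists_comp_perm hεpm hε'pm hcε
    obtain ⟨σ₂, hσ₂⟩ := exists_comp_perm hζpm hζ'pm hcζ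
    have hperm := permRel hdn σ₁ σ₂ hσ₁ hσ₂
    exact (hrel.trans hperm).trans hrel'.symm

end
end

section
/- Let v ∈ Sym_n(ℝ) be positive definite and w ∈ Sym_n(ℝ). Then every eigenvalue μ ∈ ℂ of the complex matrix A = v + 2πi·w (a root of its characteristic polynomial) satisfies Re μ > 0; moreover A is invertible, and for every y ∈ M_{n,d}(ℝ) of rank d, every eigenvalue of the complex d×d matrix yᵀ A⁻¹ y also has strictly positive real part. -/
open Matrix Complex Polynomial

private lemma aux_eval_charpoly {m : ℕ} (M : Matrix (Fin m) (Fin m) ℂ) (μ : ℂ) :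
    M.charpoly.eval μ = (μ • (1 : Matrix (Fin m) (Fin m) ℂ) - M).det := by
  rw [Matrix.charpoly, ← Polynomial.coe_evalRingHom, RingHom.map_det]
  congr 1
  ext i j
  by_cases h : i = j <;>
    simp [charmatrix_apply, Matrix.diagonal_apply, Matrix.one_apply, h]

private lemma aux_re_dot {m : ℕ} (v : Matrix (Fin m) (Fin m) ℝ) (x : Fin m → ℂ) :
    (star x ⬝ᵥ (v.map Complex.ofReal).mulVec x).re
      = (fun i => (x i).re) ⬝ᵥ v.mulVec (fun i => (x i).re)
        + (fun i => (x i).im) ⬝ᵥ v.mulVec (fun i => (x i).im) := by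
  simp only [dotProduct, mulVec, map_apply, Pi.star_apply, Finset.mul_sum, Complex.re_sum,
    Finset.sum_mul, ← Finset.sum_add_distrib]
  refine Finset.sum_congr rfl fun i _ => Finset.sum_congr rfl fun j _ => ?_
  simp [Complex.mul_re, Complex.mul_im]

private lemma aux_herm_im {m : ℕ} {H : Matrix (Fin m) (Fin m) ℂ} (hH : H.IsHermitian)
    (x : Fin m → ℂ) : (star x ⬝ᵥ H.mulVec x).im = 0 := by
  rw [← Complex.conj_eq_iff_im]
  calc (starRingEnd ℂ) (star x ⬝ᵥ H.mulVec x)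
      = star (star x ⬝ᵥ H.mulVec x) := rfl
    _ = star (H.mulVec x) ⬝ᵥ star (star x) := by rw [star_dotProduct_star]
    _ = (star x ᵥ* Hᴴ) ⬝ᵥ x := by rw [star_mulVec, star_star]
    _ = star x ⬝ᵥ Hᴴ.mulVec x := by rw [dotProduct_mulVec]
    _ = star x ⬝ᵥ H.mulVec x := by rw [hH.eq]

private lemma aux_dot_self_re {m : ℕ} (x : Fin m → ℂ) :
    (star x ⬝ᵥ x).re = ∑ i, Complex.normSq (x i) := by
  simp only [dotProduct, Pi.star_apply, Complex.re_sum]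
  exact Finset.sum_congr rfl fun i _ => by simp [Complex.mul_re, Complex.normSq_apply]

private lemma aux_dot_self_im {m : ℕ} (x : Fin m → ℂ) : (star x ⬝ᵥ x).im = 0 := by
  simp only [dotProduct, Pi.star_apply, Complex.im_sum]
  exact Finset.sum_eq_zero fun i _ => by simp [Complex.mul_im]; ring

private lemma aux_dot_self_pos {m : ℕ} {x : Fin m → ℂ} (hx : x ≠ 0) :
    0 < (star x ⬝ᵥ x).re := by
  rw [aux_dot_self_re]
  obtain ⟨i, hi⟩ : ∃ i, x i ≠ 0 := by
    by_contra h; push_neg at h; exact hx (funext h)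
  exact Finset.sum_pos' (fun j _ => Complex.normSq_nonneg _)
    ⟨i, Finset.mem_univ i, Complex.normSq_pos.mpr hi⟩

/-- Key lemma: if the complex quadratic form of `M` has positive real part on nonzero
vectors, then all roots of the characteristic polynomial have positive real part and
`M` is invertible. -/
private lemma aux_key {m : ℕ} (M : Matrix (Fin m) (Fin m) ℂ)
    (h : ∀ x : Fin m → ℂ, x ≠ 0 → 0 < (star x ⬝ᵥ M.mulVec x).re) :
    (∀ μ ∈ M.charpoly.roots, 0 < μ.re) ∧ IsUnit M := by
  constructor
  · intro μ hμ
    have hroot : M.charpoly.eval μ = 0 := (Polynomial.isRoot_of_mem_roots hμ)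
    rw [aux_eval_charpoly] at hroot
    obtain ⟨x, hx0, hx⟩ := (Matrix.exists_mulVec_eq_zero_iff).mpr hroot
    have hMx : M.mulVec x = μ • x := by
      have := hx
      rw [Matrix.sub_mulVec, Matrix.smul_mulVec, Matrix.one_mulVec, sub_eq_zero] at this
      exact this.symm
    have hq : (star x ⬝ᵥ M.mulVec x) = μ * (star x ⬝ᵥ x) := by
      rw [hMx, dotProduct_smul, smul_eq_mul]
    have h1 := h x hx0
    rw [hq, Complex.mul_re, aux_dot_self_im, mul_zero, sub_zero] at h1
    have h2 := aux_dot_self_pos hx0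
    nlinarith
  · rw [Matrix.isUnit_iff_isUnit_det, isUnit_iff_ne_zero]
    intro hdet
    obtain ⟨x, hx0, hx⟩ := (Matrix.exists_mulVec_eq_zero_iff).mpr hdet
    have := h x hx0
    rw [hx] at this
    simp at this

private lemma aux_symm_herm {m : ℕ} {w : Matrix (Fin m) (Fin m) ℝ} (hw : w.IsSymm) :
    (w.map Complex.ofReal).IsHermitian := by
  ext i j
  simp [Matrix.conjTranspose_apply, Matrix.map_apply, hw.apply i j]

/-- Quadratic form positivity for `vC + c • wC` with `v` posdef, `w` symmetric,
`c` purely imaginary. -/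
private lemma aux_quadpos {m : ℕ} {v w : Matrix (Fin m) (Fin m) ℝ} (hv : v.PosDef)
    (hw : w.IsSymm) (c : ℂ) (hc : c.re = 0) {x : Fin m → ℂ} (hx : x ≠ 0) :
    0 < (star x ⬝ᵥ (v.map Complex.ofReal + c • w.map Complex.ofReal).mulVec x).re := by
  rw [Matrix.add_mulVec, Matrix.smul_mulVec, dotProduct_add, dotProduct_smul,
    smul_eq_mul, Complex.add_re, Complex.mul_re, hc,
    aux_herm_im (aux_symm_herm hw) x, zero_mul, mul_zero, sub_zero, add_zero,
    aux_re_dot]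
  set a : Fin m → ℝ := fun i => (x i).re with ha
  set b : Fin m → ℝ := fun i => (x i).im with hb
  have hab : a ≠ 0 ∨ b ≠ 0 := by
    by_contra hcon
    push_neg at hcon
    apply hx
    funext i
    have h1 : a i = 0 := by rw [hcon.1]; rfl
    have h2 : b i = 0 := by rw [hcon.2]; rfl
    exact Complex.ext h1 h2
  have hpos : ∀ u : Fin m → ℝ, u ≠ 0 → 0 < u ⬝ᵥ v.mulVec u := by
    intro u hu
    have := hv.re_dotProduct_pos hu
    simpa using this
  have hnn : ∀ u : Fin m → ℝ, 0 ≤ u ⬝ᵥ v.mulVec u := by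
    intro u
    have := hv.posSemidef.re_dotProduct_nonneg u
    simpa using this
  rcases hab with h | h
  · have := hpos a h; have := hnn b; linarith
  · have := hpos b h; have := hnn a; linarith

private lemma aux_rank_inj {n d : ℕ} (y : Matrix (Fin n) (Fin d) ℝ) (hy : y.rank = d)
    {z : Fin d → ℂ} (hz : (y.map Complex.ofReal).mulVec z = 0) : z = 0 := by
  have hreal : ∀ u : Fin d → ℝ, y.mulVec u = 0 → u = 0 := by
    intro u hu
    have h1 : y.rank = Module.finrank ℝ (LinearMap.range y.mulVecLin) := rfl
    have h2 := y.mulVecLin.finrank_range_add_finrank_ker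
    simp only [Module.finrank_fintype_fun_eq_card, Fintype.card_fin] at h2
    rw [← h1, hy] at h2
    have hker : LinearMap.ker y.mulVecLin = ⊥ := by
      rw [Submodule.finrank_eq_zero.symm]; omega
    have : u ∈ LinearMap.ker y.mulVecLin := by simpa [Matrix.mulVecLin] using hu
    rw [hker] at this; simpa using this
  have hre : y.mulVec (fun j => (z j).re) = 0 := by
    funext i
    have := congrFun hz i
    simp only [mulVec, dotProduct, map_apply, Pi.zero_apply] at this ⊢
    have := congrArg Complex.re this
    simpa [Complex.re_sum] using this
  have him : y.mulVec (fun j => (z j).im) = 0 := by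
    funext i
    have := congrFun hz i
    simp only [mulVec, dotProduct, map_apply, Pi.zero_apply] at this ⊢
    have := congrArg Complex.im this
    simpa [Complex.im_sum] using this
  have h1 := hreal _ hre
  have h2 := hreal _ him
  funext j
  exact Complex.ext (congrFun h1 j) (congrFun h2 j)

/-- if `v` is positive definite symmetric and `w` symmetric, then every
eigenvalue (root of the characteristic polynomial) of `A = v + 2πi·w` has strictly
positive real part; moreover `A` is invertible, and for every real `n × d` matrix `y`
of rank `d`, every eigenvalue of `yᵀ A⁻¹ y` also has strictly positive real part. -/
theorem eigenvalues_in_right_half_plane (n d : ℕ) (hd : 1 ≤ d) (hdn : d ≤ n)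
    (v w : Matrix (Fin n) (Fin n) ℝ) (hv : v.PosDef) (hw : w.IsSymm) :
    letI A : Matrix (Fin n) (Fin n) ℂ :=
      v.map (Complex.ofReal) + (2 * Real.pi * Complex.I) • w.map (Complex.ofReal)
    (∀ μ ∈ A.charpoly.roots, 0 < μ.re) ∧ IsUnit A ∧
      ∀ y : Matrix (Fin n) (Fin d) ℝ, y.rank = d →
        ∀ μ ∈ ((y.map (Complex.ofReal))ᵀ * A⁻¹ * y.map (Complex.ofReal)).charpoly.roots,
          0 < μ.re := by
  set A : Matrix (Fin n) (Fin n) ℂ :=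
    v.map Complex.ofReal + (2 * Real.pi * Complex.I) • w.map Complex.ofReal with hAdef
  have hcre : ((2 : ℂ) * Real.pi * Complex.I).re = 0 := by simp
  have hA : ∀ x : Fin n → ℂ, x ≠ 0 → 0 < (star x ⬝ᵥ A.mulVec x).re := by
    intro x hx
    exact aux_quadpos hv hw _ (by simpa using hcre) hx
  obtain ⟨hroots, hunit⟩ := aux_key A hA
  refine ⟨hroots, hunit, ?_⟩
  intro y hy
  set yC : Matrix (Fin n) (Fin d) ℂ := y.map Complex.ofReal with hyC
  have hvs : v.IsSymm := by
    ext i j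
    simpa using hv.isHermitian.apply i j
  have hAH : Aᴴ = v.map Complex.ofReal + (-(2 * Real.pi * Complex.I)) • w.map Complex.ofReal := by
    rw [hAdef, conjTranspose_add, conjTranspose_smul, (aux_symm_herm hvs).eq, (aux_symm_herm hw).eq]
    congr 1
    simp [Complex.ext_iff]
  have hAHq : ∀ x : Fin n → ℂ, x ≠ 0 → 0 < (star x ⬝ᵥ Aᴴ.mulVec x).re := by
    intro x hx
    rw [hAH]
    exact aux_quadpos hv hw _ (by simp) hx
  have hdet : IsUnit A.det := (Matrix.isUnit_iff_isUnit_det A).mp hunit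
  have hAinv : A * A⁻¹ = 1 := Matrix.mul_nonsing_inv A hdet
  refine (aux_key _ ?_).1
  intro z hz
  set u : Fin n → ℂ := yC.mulVec z with hu
  have hu0 : u ≠ 0 := fun h => hz (aux_rank_inj y hy h)
  set x : Fin n → ℂ := A⁻¹.mulVec u with hx
  have hAx : A.mulVec x = u := by
    rw [hx, Matrix.mulVec_mulVec, hAinv, Matrix.one_mulVec]
  have hx0 : x ≠ 0 := by
    intro h
    apply hu0
    rw [← hAx, h, Matrix.mulVec_zero]
  have hstar : yC.mulVec (star z) = star u := by
    funext i
    simp only [hu, mulVec, dotProduct, Pi.star_apply, hyC, map_apply, star_sum, star_mul']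
    exact Finset.sum_congr rfl fun j _ => by simp [mul_comm]
  have key : star z ⬝ᵥ (yCᵀ * A⁻¹ * yC).mulVec z = star x ⬝ᵥ Aᴴ.mulVec x := by
    calc star z ⬝ᵥ (yCᵀ * A⁻¹ * yC).mulVec z
        = star z ⬝ᵥ yCᵀ.mulVec (A⁻¹.mulVec (yC.mulVec z)) := by
          rw [← Matrix.mulVec_mulVec, ← Matrix.mulVec_mulVec]
      _ = (star z ᵥ* yCᵀ) ⬝ᵥ (A⁻¹.mulVec u) := by rw [dotProduct_mulVec, hu]
      _ = (yC.mulVec (star z)) ⬝ᵥ x := by rw [Matrix.vecMul_transpose, hx]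
      _ = star u ⬝ᵥ x := by rw [hstar]
      _ = star (A.mulVec x) ⬝ᵥ x := by rw [hAx]
      _ = (star x ᵥ* Aᴴ) ⬝ᵥ x := by rw [star_mulVec]
      _ = star x ⬝ᵥ Aᴴ.mulVec x := (dotProduct_mulVec _ _ _).symm
  rw [key]
  exact hAHq x hx0
end
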